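/- arXiv:1307.6551 — 4 statements merged into one kernel-verified Lean document; each statement's English description precedes it below -/
import Mathlib

section
/- Let E ⊆ ℝⁿ be a measurable set of positive measure such that for almost every (n+1)-tuple (x₁,…,x_{n+1}) ∈ E^{n+1}, the convex hull of {x₁,…,x_{n+1}} is contained in E up to an n-dimensional null set. Then the convex hull of the set of Lebesgue density points of E is open and differs from E by a null set. -/
open MeasureTheory Set Filter
open scoped ENNReal Topology

/-- The set of Lebesgue density points of `E`: points where `E` has density 1. -/
def densityPoints {n : ℕ} (E : Set (Fin n → ℝ)) : Set (Fin n → ℝ) :=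
  {x | Tendsto (fun r : ℝ => volume (E ∩ Metric.ball x r) / volume (Metric.ball x r))
      (𝓝[>] 0) (𝓝 1)}

section Aux

variable {n : ℕ}

/-- Any interior point of a set almost contained in `E` is a density point of `E`. -/
lemma mem_densityPoints_of_ball (E S : Set (Fin n → ℝ)) (hSE : volume (S \ E) = 0)
    {x : Fin n → ℝ} {r : ℝ} (hr : 0 < r) (h : Metric.ball x r ⊆ S) :
    x ∈ densityPoints E := by
  have hev : ∀ᶠ ρ in 𝓝[>] (0 : ℝ),
      volume (E ∩ Metric.ball x ρ) / volume (Metric.ball x ρ) = 1 := by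
    filter_upwards [Ioo_mem_nhdsGT_of_mem (Set.left_mem_Ico.mpr hr)] with ρ hρ
    have hb : Metric.ball x ρ ⊆ S := (Metric.ball_subset_ball hρ.2.le).trans h
    have h0 : volume (Metric.ball x ρ \ E) = 0 :=
      measure_mono_null (Set.diff_subset_diff hb Subset.rfl) hSE
    have hle : volume (Metric.ball x ρ) ≤ volume (E ∩ Metric.ball x ρ) := by
      calc volume (Metric.ball x ρ)
          ≤ volume ((E ∩ Metric.ball x ρ) ∪ (Metric.ball x ρ \ E)) := by
            refine measure_mono fun y hy => ?_
            by_cases hyE : y ∈ E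
            exacts [Or.inl ⟨hyE, hy⟩, Or.inr ⟨hy, hyE⟩]
        _ ≤ volume (E ∩ Metric.ball x ρ) + volume (Metric.ball x ρ \ E) :=
            measure_union_le _ _
        _ = volume (E ∩ Metric.ball x ρ) := by rw [h0, add_zero]
    have heq : volume (E ∩ Metric.ball x ρ) = volume (Metric.ball x ρ) :=
      le_antisymm (measure_mono inter_subset_right) hle
    rw [heq]
    have hvol : volume (Metric.ball x ρ) = ENNReal.ofReal ((2 * ρ) ^ n) := by
      simpa using Real.volume_pi_ball x hρ.1
    rw [hvol]
    exact ENNReal.div_self (ENNReal.ofReal_pos.mpr (by have := hρ.1; positivity)).ne' ENNReal.ofReal_ne_top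
  exact (tendsto_congr' hev).mpr tendsto_const_nhds

/-- Lebesgue density theorem for our ball-based definition. -/
lemma ae_mem_iff_densityPoints (E : Set (Fin n → ℝ)) (hE : MeasurableSet E) :
    ∀ᵐ x : Fin n → ℝ, (x ∈ E ↔ x ∈ densityPoints E) := by
  filter_upwards [Besicovitch.ae_tendsto_measure_inter_div_of_measurableSet volume hE]
    with x hx
  have hcongr : ∀ᶠ ρ in 𝓝[>] (0 : ℝ),
      volume (E ∩ Metric.closedBall x ρ) / volume (Metric.closedBall x ρ)
        = volume (E ∩ Metric.ball x ρ) / volume (Metric.ball x ρ) := by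
    filter_upwards [self_mem_nhdsWithin] with ρ (hρ : ρ ∈ Ioi (0:ℝ))
    have hρ0 : (0:ℝ) < ρ := hρ
    have hb : volume (Metric.ball x ρ) = ENNReal.ofReal ((2 * ρ) ^ n) := by
      simpa using Real.volume_pi_ball x hρ0
    have hcb : volume (Metric.closedBall x ρ) = ENNReal.ofReal ((2 * ρ) ^ n) := by
      simpa using Real.volume_pi_closedBall x hρ0.le
    have h1 : volume (Metric.closedBall x ρ) = volume (Metric.ball x ρ) := by rw [hb, hcb]
    have hsub : volume (Metric.closedBall x ρ \ Metric.ball x ρ) = 0 := by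
      rw [measure_diff Metric.ball_subset_closedBall
        measurableSet_ball.nullMeasurableSet (hb ▸ ENNReal.ofReal_ne_top), h1, tsub_self]
    have h2 : volume (E ∩ Metric.closedBall x ρ) = volume (E ∩ Metric.ball x ρ) := by
      refine le_antisymm ?_ (measure_mono
        (inter_subset_inter_right _ Metric.ball_subset_closedBall))
      calc volume (E ∩ Metric.closedBall x ρ)
          ≤ volume ((E ∩ Metric.ball x ρ) ∪ (Metric.closedBall x ρ \ Metric.ball x ρ)) := by
            refine measure_mono fun y hy => ?_
            by_cases hyb : y ∈ Metric.ball x ρ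
            exacts [Or.inl ⟨hy.1, hyb⟩, Or.inr ⟨hy.2, hyb⟩]
        _ ≤ _ + _ := measure_union_le _ _
        _ = volume (E ∩ Metric.ball x ρ) := by rw [hsub, add_zero]
    rw [h1, h2]
  have hx' : Tendsto (fun ρ : ℝ => volume (E ∩ Metric.ball x ρ) / volume (Metric.ball x ρ))
      (𝓝[>] 0) (𝓝 (E.indicator 1 x)) := (tendsto_congr' hcongr).mp hx
  by_cases hxE : x ∈ E
  · have : E.indicator (1 : (Fin n → ℝ) → ℝ≥0∞) x = 1 := by simp [hxE]
    rw [this] at hx'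
    exact ⟨fun _ => hx', fun _ => hxE⟩
  · constructor
    · exact fun h => absurd h hxE
    · intro hxD
      have : E.indicator (1 : (Fin n → ℝ) → ℝ≥0∞) x = 0 := by simp [hxE]
      rw [this] at hx'
      have := tendsto_nhds_unique hx' hxD
      simp at this

/-- If every point of `ball z ε` is within `δ` of the closed convex set `K`,
then `ball z (ε - 3δ) ⊆ K`. -/
lemma ball_subset_of_near {W : Type*} [NormedAddCommGroup W] [NormedSpace ℝ W]
    {K : Set W} (hK : Convex ℝ K) (hKc : IsClosed K) {z : W} {ε δ : ℝ} (hδ : 0 < δ)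
    (h : ∀ w ∈ Metric.ball z ε, ∃ k ∈ K, dist w k ≤ δ) :
    Metric.ball z (ε - 3 * δ) ⊆ K := by
  intro w hw
  rw [Metric.mem_ball] at hw
  have hwε : w ∈ Metric.ball z ε := by
    rw [Metric.mem_ball]; linarith
  by_contra hwK
  obtain ⟨f, u, hfK, hfw⟩ := geometric_hahn_banach_closed_point hK hKc hwK
  have hf0 : f ≠ 0 := by
    rintro rfl
    obtain ⟨k, hk, -⟩ := h w hwε
    have h1 := hfK k hk
    simp only [ContinuousLinearMap.zero_apply] at h1 hfw
    linarith
  have hfpos : 0 < ‖f‖ := norm_pos_iff.mpr hf0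
  obtain ⟨v, hv1, hfv⟩ := f.exists_lt_apply_of_lt_opNorm (half_lt_self hfpos)
  set v' : W := if 0 ≤ f v then v else -v with hv'def
  have hv'1 : ‖v'‖ ≤ 1 := by
    rw [hv'def]; split <;> simp [hv1.le]
  have hfv' : ‖f‖ / 2 < f v' := by
    rw [hv'def]; split
    · rwa [Real.norm_eq_abs, abs_of_nonneg ‹0 ≤ f v›] at hfv
    · rw [map_neg]
      rw [Real.norm_eq_abs, abs_of_neg (lt_of_not_ge ‹¬ 0 ≤ f v›)] at hfv
      linarith
  set q : W := w + (2 * δ) • v' with hqdef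
  have hq : q ∈ Metric.ball z ε := by
    rw [Metric.mem_ball]
    calc dist q z ≤ dist q w + dist w z := dist_triangle _ _ _
      _ ≤ 2 * δ * 1 + dist w z := by
          refine add_le_add ?_ le_rfl
          rw [hqdef, dist_eq_norm, add_sub_cancel_left, norm_smul, Real.norm_eq_abs,
            abs_of_nonneg (by linarith : (0:ℝ) ≤ 2 * δ)]
          exact mul_le_mul_of_nonneg_left hv'1 (by linarith)
      _ < ε := by linarith
  obtain ⟨k, hkK, hqk⟩ := h q hq
  have h1 : f k < u := hfK k hkK
  have h2 : f q - f k ≤ ‖f‖ * δ := by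
    calc f q - f k = f (q - k) := by rw [map_sub]
      _ ≤ ‖f (q - k)‖ := by rw [Real.norm_eq_abs]; exact le_abs_self _
      _ ≤ ‖f‖ * ‖q - k‖ := f.le_opNorm _
      _ ≤ ‖f‖ * δ := by
          refine mul_le_mul_of_nonneg_left ?_ hfpos.le
          rw [← dist_eq_norm]; exact hqk
  have h3 : f q = f w + 2 * δ * f v' := by
    rw [hqdef, map_add, f.map_smul, smul_eq_mul]
  nlinarith [hfv', hfw, hδ]

/-- Vertices of a cube. -/
def cubeVert (c : Fin n → ℝ) (ρ : ℝ) (s : Fin n → Bool) : Fin n → ℝ :=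
  fun i => c i + (if s i then ρ else -ρ)

lemma cubeVert_mem_closedBall (c : Fin n → ℝ) {ρ : ℝ} (hρ : 0 ≤ ρ) (s : Fin n → Bool) :
    cubeVert c ρ s ∈ Metric.closedBall c ρ := by
  rw [Metric.mem_closedBall, dist_pi_le_iff hρ]
  intro i
  simp only [cubeVert, Real.dist_eq, add_sub_cancel_left]
  split <;> simp [abs_of_nonneg hρ, abs_of_nonpos (neg_nonpos.mpr hρ), hρ]

lemma closedBall_eq_convexHull_cubeVert (c : Fin n → ℝ) {ρ : ℝ} (hρ : 0 ≤ ρ) :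
    Metric.closedBall c ρ = convexHull ℝ (Set.range (cubeVert c ρ)) := by
  have hrange : Set.range (cubeVert c ρ)
      = Set.pi univ (fun i => ({c i - ρ, c i + ρ} : Set ℝ)) := by
    ext y
    constructor
    · rintro ⟨s, rfl⟩ i _
      by_cases h : s i
      · simp [cubeVert, h]
      · simp [cubeVert, h, sub_eq_add_neg]
    · intro hy
      classical
      refine ⟨fun i => decide (y i = c i + ρ), funext fun i => ?_⟩
      have hyi := hy i (mem_univ i)
      simp only [Set.mem_insert_iff, Set.mem_singleton_iff] at hyi
      simp only [cubeVert]
      by_cases h2 : y i = c i + ρ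
      · simp [h2]
      · have hd : (decide (y i = c i + ρ)) = false := decide_eq_false h2
        rcases hyi with h | h
        · simp only [hd, Bool.false_eq_true, if_false]
          rw [h]; ring
        · exact absurd h h2
  rw [hrange, convexHull_pi]
  have : ∀ i, convexHull ℝ ({c i - ρ, c i + ρ} : Set ℝ) = Icc (c i - ρ) (c i + ρ) := by
    intro i
    rw [convexHull_pair, segment_eq_Icc (by linarith)]
  rw [closedBall_pi _ hρ]
  exact congrArg (Set.pi univ) (funext fun i => by rw [this i, Real.closedBall_eq_Icc])

/-- Pulling back a null set of `(n+1)`-tuples along injective coordinate selection. -/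
lemma null_preimage_comp {ι : Type} [Fintype ι] (f : Fin (n + 1) → ι)
    (hf : Function.Injective f) {Bad : Set (Fin (n + 1) → (Fin n → ℝ))}
    (hB : volume Bad = 0) :
    volume {x : ι → (Fin n → ℝ) | (fun j => x (f j)) ∈ Bad} = 0 := by
  classical
  set B := toMeasurable volume Bad with hBdef
  have hBm : MeasurableSet B := measurableSet_toMeasurable _ _
  have hB0 : volume B = 0 := by rw [hBdef, measure_toMeasurable]; exact hB
  have hsub : Bad ⊆ B := subset_toMeasurable _ _
  refine measure_mono_null (fun x hx => hsub hx)
    (?_ : volume {x : ι → (Fin n → ℝ) | (fun j => x (f j)) ∈ B} = 0)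
  set p : ι → Prop := fun i => i ∈ Set.range f with hp
  letI : Fintype {i // p i} := Subtype.fintype p
  set g : Fin (n + 1) ≃ {i // p i} := Equiv.ofInjective f hf with hg
  set C : Set ({i // p i} → (Fin n → ℝ)) := {y | (fun j => y (g j)) ∈ B} with hC
  have hCmeas : MeasurableSet C := by
    have hmeas : Measurable fun (y : {i // p i} → (Fin n → ℝ)) => (fun j => y (g j)) :=
      measurable_pi_lambda _ (fun j => measurable_pi_apply _)
    exact hmeas hBm
  have hC0 : volume C = 0 := by
    have mpl := volume_measurePreserving_piCongrLeft (fun _ : {i // p i} => (Fin n → ℝ)) g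
    have hpre : (MeasurableEquiv.piCongrLeft (fun _ : {i // p i} => (Fin n → ℝ)) g) ⁻¹' C
        = B := by
      ext w
      simp only [hC, mem_preimage, mem_setOf_eq]
      have hcoord : ∀ j, (MeasurableEquiv.piCongrLeft (fun _ : {i // p i} => (Fin n → ℝ)) g) w
          (g j) = w j := by
        intro j
        rw [MeasurableEquiv.coe_piCongrLeft]
        exact Equiv.piCongrLeft_apply_apply (fun _ : {i // p i} => (Fin n → ℝ)) g w j
      rw [show (fun j => (MeasurableEquiv.piCongrLeft
          (fun _ : {i // p i} => (Fin n → ℝ)) g) w (g j)) = w from funext hcoord]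
    calc volume C
        = volume ((MeasurableEquiv.piCongrLeft (fun _ : {i // p i} => (Fin n → ℝ)) g) ⁻¹' C) :=
          (mpl.measure_preimage_equiv C).symm
      _ = volume B := by rw [hpre]
      _ = 0 := hB0
  have mp := volume_preserving_piEquivPiSubtypeProd (fun _ : ι => (Fin n → ℝ)) p
  have hpre2 : {x : ι → (Fin n → ℝ) | (fun j => x (f j)) ∈ B}
      = (MeasurableEquiv.piEquivPiSubtypeProd (fun _ : ι => (Fin n → ℝ)) p) ⁻¹'
        (C ×ˢ (univ : Set ({i // ¬ p i} → (Fin n → ℝ)))) := by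
    ext x
    exact Iff.intro (fun h => ⟨h, trivial⟩) (fun h => h.1)
  rw [hpre2, mp.measure_preimage_equiv]
  exact (Measure.prod_prod C univ).trans (by exact mul_eq_zero_of_left hC0 _)

/-- The main engine: if `ball z ε` is inside the convex hull of a finite configuration of points
near each of which `E` has positive measure, then (using the hypothesis on `(n+1)`-tuples)
a slightly smaller ball consists of density points of `E`. -/
lemma engine (E : Set (Fin n → ℝ)) (hE : MeasurableSet E)
    (hhull : volume {x : Fin (n + 1) → (Fin n → ℝ) |
        (∀ i, x i ∈ E) ∧ volume (convexHull ℝ (Set.range x) \ E) ≠ 0} = 0)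
    {ι : Type} [Fintype ι] (hcard : n + 1 ≤ Fintype.card ι)
    (p : ι → Fin n → ℝ) {z : Fin n → ℝ} {ε δ : ℝ} (hδ : 0 < δ) (hδε : 3 * δ < ε)
    (hpos : ∀ j, 0 < volume (E ∩ Metric.ball (p j) δ))
    (hball : Metric.ball z ε ⊆ convexHull ℝ (Set.range p)) :
    Metric.ball z (ε - 3 * δ) ⊆ densityPoints E := by
  classical
  haveI : Nonempty ι := Fintype.card_pos_iff.mp (by omega)
  set Bad : Set (Fin (n + 1) → (Fin n → ℝ)) := {x : Fin (n + 1) → (Fin n → ℝ) |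
      (∀ i, x i ∈ E) ∧ volume (convexHull ℝ (Set.range x) \ E) ≠ 0} with hBad
  set Null : Set (ι → Fin n → ℝ) :=
    ⋃ f : Fin (n + 1) ↪ ι, {x | (fun j => x (f j)) ∈ Bad} with hNulldef
  have hNull : volume Null = 0 :=
    measure_iUnion_null fun f => null_preimage_comp f.1 f.2 hhull
  have hpi : 0 < volume (Set.pi univ fun j => E ∩ Metric.ball (p j) δ) := by
    rw [volume_pi_pi]
    exact CanonicallyOrderedAdd.prod_pos.mpr fun j _ => hpos j
  obtain ⟨x, hxmem, hxN⟩ :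
      ∃ x : ι → Fin n → ℝ, x ∈ (Set.pi univ fun j => E ∩ Metric.ball (p j) δ) ∧ x ∉ Null := by
    by_contra hcon
    push_neg at hcon
    have hss : (Set.pi univ fun j => E ∩ Metric.ball (p j) δ) ⊆ Null := hcon
    have := (measure_mono hss).trans (le_of_eq hNull)
    exact absurd this (by simpa using hpi.ne')
  have hxE : ∀ j, x j ∈ E := fun j => (hxmem j (mem_univ j)).1
  have hxb : ∀ j, dist (x j) (p j) < δ := fun j => (hxmem j (mem_univ j)).2
  have hgood : ∀ f : Fin (n + 1) ↪ ι,
      volume (convexHull ℝ (Set.range fun j => x (f j)) \ E) = 0 := by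
    intro f
    by_contra hne
    exact hxN (Set.mem_iUnion.mpr ⟨f, ⟨fun i => hxE (f i), hne⟩⟩)
  -- the convex hull of the whole configuration is a.e. contained in E
  have hxhull : volume (convexHull ℝ (Set.range x) \ E) = 0 := by
    have hcover : convexHull ℝ (Set.range x)
        ⊆ ⋃ f : Fin (n + 1) ↪ ι, convexHull ℝ (Set.range fun j => x (f j)) := by
      intro w hw
      rw [convexHull_eq_union] at hw
      simp only [Set.mem_iUnion, exists_prop] at hw
      obtain ⟨T, hTsub, hTai, hwT⟩ := hw
      have hcardT : T.card ≤ n + 1 := by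
        have h1 := hTai.card_le_finrank_succ
        rw [Fintype.card_coe] at h1
        refine h1.trans ?_
        have h2 : Module.finrank ℝ (vectorSpan ℝ (Set.range ((↑) : T → (Fin n → ℝ))))
            ≤ Module.finrank ℝ (Fin n → ℝ) := Submodule.finrank_le _
        rw [Module.finrank_fin_fun] at h2
        omega
      -- choose preimage indices
      set c : (Fin n → ℝ) → ι := fun y =>
        if h : ∃ i, x i = y then h.choose else Classical.arbitrary ι with hcdef
      have hc : ∀ y ∈ T, x (c y) = y := by
        intro y hy
        obtain ⟨i, hi⟩ := hTsub hy
        have hex : ∃ i, x i = y := ⟨i, hi⟩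
        simp only [hcdef, dif_pos hex]
        exact hex.choose_spec
      set s : Finset ι := T.image c with hsdef
      have hs : s.card ≤ n + 1 := (Finset.card_image_le).trans hcardT
      obtain ⟨t, hst, -, htcard⟩ := Finset.exists_subsuperset_card_eq
        (Finset.subset_univ s) hs (by simpa [Finset.card_univ] using hcard)
      have htc : Fintype.card ↥t = n + 1 := by simp [htcard]
      let e : Fin (n + 1) ≃ ↥t := (Fintype.equivFinOfCardEq htc).symm
      let femb : Fin (n + 1) ↪ ι :=
        ⟨fun j => (e j : ι), fun a b hab => e.injective (Subtype.ext hab)⟩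
      refine Set.mem_iUnion.mpr ⟨femb, ?_⟩
      refine convexHull_mono ?_ hwT
      intro y hy
      have hcy : c y ∈ t := hst (Finset.mem_image_of_mem c hy)
      obtain ⟨j, hj⟩ := e.surjective ⟨c y, hcy⟩
      refine ⟨j, ?_⟩
      show x (femb j) = y
      have : (femb j : ι) = c y := by
        show ((e j : ↥t) : ι) = c y
        rw [hj]
      rw [this, hc y hy]
    refine measure_mono_null (fun w hw => ?_) (measure_iUnion_null fun f => hgood f)
    obtain ⟨hw1, hw2⟩ := hw
    obtain ⟨s', hws'⟩ := Set.mem_iUnion.mp (hcover hw1)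
    exact Set.mem_iUnion.mpr ⟨s', hws', hw2⟩
  -- approximation of the hull of `p` by the hull of `x`
  have happrox : ∀ w ∈ Metric.ball z ε, ∃ k ∈ convexHull ℝ (Set.range x), dist w k ≤ δ := by
    intro w hw
    have hw' := hball hw
    rw [convexHull_eq] at hw'
    obtain ⟨ι', t, wt, zf, hw0, hw1, hzf, hcm⟩ := hw'
    set jf : ι' → ι := fun i =>
      if h : ∃ jj, p jj = zf i then h.choose else Classical.arbitrary ι with hjfdef
    have hjf : ∀ i ∈ t, p (jf i) = zf i := by
      intro i hi
      obtain ⟨jj, hjj⟩ := hzf i hi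
      have hex : ∃ jj, p jj = zf i := ⟨jj, hjj⟩
      simp only [hjfdef, dif_pos hex]
      exact hex.choose_spec
    refine ⟨t.centerMass wt (fun i => x (jf i)),
      Finset.centerMass_mem_convexHull _ hw0 (hw1 ▸ one_pos) (fun i _ => Set.mem_range_self _), ?_⟩
    rw [← hcm, Finset.centerMass_eq_of_sum_1 _ _ hw1, Finset.centerMass_eq_of_sum_1 _ _ hw1,
      dist_eq_norm, ← Finset.sum_sub_distrib]
    calc ‖∑ i ∈ t, (wt i • zf i - wt i • x (jf i))‖
        ≤ ∑ i ∈ t, ‖wt i • zf i - wt i • x (jf i)‖ := norm_sum_le _ _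
      _ ≤ ∑ i ∈ t, wt i * δ := by
          refine Finset.sum_le_sum fun i hi => ?_
          rw [← smul_sub, norm_smul, Real.norm_eq_abs, abs_of_nonneg (hw0 i hi)]
          refine mul_le_mul_of_nonneg_left ?_ (hw0 i hi)
          rw [← hjf i hi, ← dist_eq_norm, dist_comm]
          exact (hxb (jf i)).le
      _ = δ := by rw [← Finset.sum_mul, hw1, one_mul]
  have hK := ball_subset_of_near (convex_convexHull ℝ _)
    (((Set.finite_range x).isCompact_convexHull ℝ).isClosed) hδ happrox
  intro w hw
  rw [Metric.mem_ball] at hw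
  have hwr : 0 < ε - 3 * δ - dist w z := by
    have := dist_nonneg (x := w) (y := z)
    linarith
  refine mem_densityPoints_of_ball E (convexHull ℝ (Set.range x)) hxhull hwr ?_
  intro y hy
  rw [Metric.mem_ball] at hy
  refine hK ?_
  rw [Metric.mem_ball]
  calc dist y z ≤ dist y w + dist w z := dist_triangle _ _ _
    _ < ε - 3 * δ := by linarith

/-- Key geometric step: if `E` has positive measure in small balls around both endpoint
regions, then points on the segment are surrounded by density points. -/
lemma key (E : Set (Fin n → ℝ)) (hE : MeasurableSet E)
    (hhull : volume {x : Fin (n + 1) → (Fin n → ℝ) |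
        (∀ i, x i ∈ E) ∧ volume (convexHull ℝ (Set.range x) \ E) ≠ 0} = 0)
    {a b z : Fin n → ℝ} {r t : ℝ} (hr0 : 0 < r) (ht0 : 0 ≤ t) (ht1 : t ≤ 1)
    (hz : z = t • a + (1 - t) • b)
    (ha : ∀ y ∈ Metric.closedBall a (r / 2), 0 < volume (E ∩ Metric.ball y (r / 8)))
    (hb : ∀ y ∈ Metric.closedBall b (r / 2), 0 < volume (E ∩ Metric.ball y (r / 8))) :
    Metric.ball z (r / 8) ⊆ densityPoints E := by
  have h38 : r / 8 = r / 2 - 3 * (r / 8) := by ring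
  rw [h38]
  refine engine E hE hhull ?_
    (fun cs : Bool × (Fin n → Bool) => cubeVert (cond cs.1 b a) (r / 2) cs.2)
    (δ := r / 8) (by positivity) (by linarith) ?_ ?_
  · simp only [Fintype.card_prod, Fintype.card_bool, Fintype.card_pi, Fintype.card_fin,
      Finset.prod_const, Finset.card_univ]
    have h2n := Nat.lt_two_pow_self (n := n)
    omega
  · rintro ⟨c, s⟩
    have hmem := cubeVert_mem_closedBall (cond c b a) (by positivity : (0:ℝ) ≤ r / 2) s
    cases c
    · exact ha _ hmem
    · exact hb _ hmem
  · intro w hw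
    rw [Metric.mem_ball] at hw
    have hwa : a + (w - z) ∈ Metric.closedBall a (r / 2) := by
      rw [Metric.mem_closedBall, dist_eq_norm, add_sub_cancel_left, ← dist_eq_norm]
      exact hw.le
    have hwb : b + (w - z) ∈ Metric.closedBall b (r / 2) := by
      rw [Metric.mem_closedBall, dist_eq_norm, add_sub_cancel_left, ← dist_eq_norm]
      exact hw.le
    rw [closedBall_eq_convexHull_cubeVert a (by positivity : (0:ℝ) ≤ r / 2)] at hwa
    rw [closedBall_eq_convexHull_cubeVert b (by positivity : (0:ℝ) ≤ r / 2)] at hwb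
    have h1 : a + (w - z) ∈ convexHull ℝ (Set.range
        fun cs : Bool × (Fin n → Bool) => cubeVert (cond cs.1 b a) (r / 2) cs.2) :=
      convexHull_mono (by rintro v ⟨s, hs⟩; exact ⟨(false, s), hs⟩) hwa
    have h2 : b + (w - z) ∈ convexHull ℝ (Set.range
        fun cs : Bool × (Fin n → Bool) => cubeVert (cond cs.1 b a) (r / 2) cs.2) :=
      convexHull_mono (by rintro v ⟨s, hs⟩; exact ⟨(true, s), hs⟩) hwb
    have hcomb := (convex_convexHull ℝ _) h1 h2 ht0 (by linarith : 0 ≤ 1 - t)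
      (by ring : t + (1 - t) = 1)
    have hwrepr : w = t • (a + (w - z)) + (1 - t) • (b + (w - z)) := by
      rw [hz]; module
    rwa [← hwrepr] at hcomb

/-- Every density point has a neighbourhood of density points. -/
lemma step1 (E : Set (Fin n → ℝ)) (hE : MeasurableSet E)
    (hhull : volume {x : Fin (n + 1) → (Fin n → ℝ) |
        (∀ i, x i ∈ E) ∧ volume (convexHull ℝ (Set.range x) \ E) ≠ 0} = 0)
    {d : Fin n → ℝ} (hd : d ∈ densityPoints E) :
    ∃ r > 0, Metric.ball d r ⊆ densityPoints E := by
  have hdT : Tendsto (fun ρ : ℝ => volume (E ∩ Metric.ball d ρ) / volume (Metric.ball d ρ))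
      (𝓝[>] 0) (𝓝 1) := hd
  set c : ℝ≥0∞ := ENNReal.ofReal ((1 / 8 : ℝ) ^ n / 2) with hc
  have hc0 : c ≠ 0 := (ENNReal.ofReal_pos.mpr (by positivity)).ne'
  have h1c : (1 : ℝ≥0∞) - c < 1 := ENNReal.sub_lt_self ENNReal.one_ne_top one_ne_zero hc0
  obtain ⟨r, hrmem⟩ := ((hdT.eventually (isOpen_Ioi.mem_nhds h1c)).and self_mem_nhdsWithin).exists
  have hrlt : (1 : ℝ≥0∞) - c < volume (E ∩ Metric.ball d r) / volume (Metric.ball d r) :=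
    hrmem.1
  have hr0 : (0 : ℝ) < r := hrmem.2
  have hballs : ∀ y ∈ Metric.closedBall d (r / 2), 0 < volume (E ∩ Metric.ball y (r / 8)) := by
    intro y hy
    rw [pos_iff_ne_zero]
    intro h0'
    set B := Metric.ball d r with hBdef
    set Bs := Metric.ball y (r / 8) with hBsdef
    have hsubB : Bs ⊆ B := by
      intro v hv
      rw [hBsdef, Metric.mem_ball] at hv
      rw [Metric.mem_closedBall] at hy
      rw [hBdef, Metric.mem_ball]
      calc dist v d ≤ dist v y + dist y d := dist_triangle _ _ _
        _ < r := by linarith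
    have hEB : volume (E ∩ B) ≤ volume (B \ Bs) := by
      calc volume (E ∩ B) ≤ volume ((B \ Bs) ∪ (E ∩ Bs)) := by
            refine measure_mono fun v hv => ?_
            by_cases hvB : v ∈ Bs
            exacts [Or.inr ⟨hv.1, hvB⟩, Or.inl ⟨hv.2, hvB⟩]
        _ ≤ volume (B \ Bs) + volume (E ∩ Bs) := measure_union_le _ _
        _ = volume (B \ Bs) := by rw [h0', add_zero]
    have hBs : volume Bs = ENNReal.ofReal ((2 * (r / 8)) ^ n) := by
      simpa using Real.volume_pi_ball y (by positivity : (0:ℝ) < r / 8)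
    have hB : volume B = ENNReal.ofReal ((2 * r) ^ n) := by
      simpa using Real.volume_pi_ball d hr0
    have hdiff : volume (B \ Bs) = ENNReal.ofReal ((2 * r) ^ n - (2 * (r / 8)) ^ n) := by
      rw [measure_diff hsubB measurableSet_ball.nullMeasurableSet
        (hBs ▸ ENNReal.ofReal_ne_top), hB, hBs, ← ENNReal.ofReal_sub _ (by positivity)]
    have hratio : volume (E ∩ B) / volume B ≤ ENNReal.ofReal (1 - (1 / 8 : ℝ) ^ n) := by
      calc volume (E ∩ B) / volume B ≤ volume (B \ Bs) / volume B :=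
            ENNReal.div_le_div_right hEB _
        _ = ENNReal.ofReal (((2 * r) ^ n - (2 * (r / 8)) ^ n) / (2 * r) ^ n) := by
            rw [hdiff, hB, ← ENNReal.ofReal_div_of_pos (by positivity)]
        _ = ENNReal.ofReal (1 - (1 / 8 : ℝ) ^ n) := by
            congr 1
            have h28 : (2 * (r / 8)) ^ n = (1 / 8 : ℝ) ^ n * (2 * r) ^ n := by
              rw [← mul_pow]; congr 1; ring
            rw [h28]
            have hne : ((2 * r) ^ n : ℝ) ≠ 0 := by positivity
            field_simp
    have hle : ENNReal.ofReal (1 - (1 / 8 : ℝ) ^ n) ≤ 1 - c := by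
      rw [hc, ← ENNReal.ofReal_one, ← ENNReal.ofReal_sub _ (by positivity)]
      refine ENNReal.ofReal_le_ofReal ?_
      have hp := pow_pos (by norm_num : (0:ℝ) < 1 / 8) n
      linarith
    exact absurd (lt_of_lt_of_le (lt_of_lt_of_le hrlt hratio) hle) (lt_irrefl _)
  refine ⟨r / 8, by positivity, ?_⟩
  exact key E hE hhull hr0 (by norm_num : (0:ℝ) ≤ 1/2) (by norm_num : (1:ℝ)/2 ≤ 1)
    (by module : d = (1/2 : ℝ) • d + (1 - 1/2 : ℝ) • d) hballs hballs

end Aux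

/-- If `E` has positive measure and for almost every `(n+1)`-tuple of points of `E`
the convex hull of the tuple is contained in `E` up to a null set, then the convex
hull of the set of Lebesgue density points of `E` is open and differs from `E`
by a null set. -/
theorem convexHull_densityPoints_of_ae_hulls {n : ℕ} (E : Set (Fin n → ℝ))
    (hE : MeasurableSet E) (hEpos : 0 < volume E)
    (hhull : volume {x : Fin (n + 1) → (Fin n → ℝ) |
        (∀ i, x i ∈ E) ∧ volume (convexHull ℝ (Set.range x) \ E) ≠ 0} = 0) :
    IsOpen (convexHull ℝ (densityPoints E)) ∧
      volume (symmDiff (convexHull ℝ (densityPoints E)) E) = 0 := by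
  set D := densityPoints E with hD
  set S : Set (Fin n → ℝ) := {z | ∃ r > 0, Metric.ball z r ⊆ D} with hS
  have hDS : D ⊆ S := fun d hd => step1 E hE hhull hd
  have hSD : S ⊆ D := by
    rintro z ⟨r, hr, hball⟩
    exact hball (Metric.mem_ball_self hr)
  have hae := ae_mem_iff_densityPoints E hE
  have hae0 : volume {x : Fin n → ℝ | ¬ (x ∈ E ↔ x ∈ densityPoints E)} = 0 := ae_iff.mp hae
  have hDE : volume (D \ E) = 0 := by
    refine measure_mono_null (fun x hx => ?_) hae0
    exact fun hiff => hx.2 (hiff.mpr hx.1)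
  have hED : volume (E \ D) = 0 := by
    refine measure_mono_null (fun x hx => ?_) hae0
    exact fun hiff => hx.2 (hiff.mp hx.1)
  have hSconv : Convex ℝ S := by
    intro a haS b hbS ta tb hta htb htab
    obtain ⟨ra, hra, hba⟩ := haS
    obtain ⟨rb, hrb, hbb⟩ := hbS
    set r := min ra rb with hrdef
    have hr0 : 0 < r := lt_min hra hrb
    have hpos : ∀ (p : Fin n → ℝ) (rp : ℝ), 0 < rp → r ≤ rp → Metric.ball p rp ⊆ D →
        ∀ y ∈ Metric.closedBall p (r / 2), 0 < volume (E ∩ Metric.ball y (r / 8)) := by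
      intro p rp hrp hrrp hbp y hy
      have hsub : Metric.ball y (r / 8) ⊆ D := by
        intro v hv
        refine hbp ?_
        rw [Metric.mem_ball] at hv ⊢
        rw [Metric.mem_closedBall] at hy
        calc dist v p ≤ dist v y + dist y p := dist_triangle _ _ _
          _ < rp := by linarith
      have h0 : volume (Metric.ball y (r / 8) \ E) = 0 := by
        refine measure_mono_null (fun v hv => ?_) hDE
        exact ⟨hsub hv.1, hv.2⟩
      have hvol : (0 : ℝ≥0∞) < volume (Metric.ball y (r / 8)) := by
        rw [show volume (Metric.ball y (r / 8)) = ENNReal.ofReal ((2 * (r / 8)) ^ n) from by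
          simpa using Real.volume_pi_ball y (by positivity : (0:ℝ) < r / 8)]
        exact ENNReal.ofReal_pos.mpr (by positivity)
      calc (0 : ℝ≥0∞) < volume (Metric.ball y (r / 8)) := hvol
        _ ≤ volume ((E ∩ Metric.ball y (r / 8)) ∪ (Metric.ball y (r / 8) \ E)) := by
            refine measure_mono fun v hv => ?_
            by_cases hvE : v ∈ E
            exacts [Or.inl ⟨hvE, hv⟩, Or.inr ⟨hv, hvE⟩]
        _ ≤ volume (E ∩ Metric.ball y (r / 8)) + volume (Metric.ball y (r / 8) \ E) :=
            measure_union_le _ _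
        _ = volume (E ∩ Metric.ball y (r / 8)) := by rw [h0, add_zero]
    have hA := hpos a ra hra (min_le_left _ _) hba
    have hB := hpos b rb hrb (min_le_right _ _) hbb
    have htb' : tb = 1 - ta := by linarith
    refine ⟨r / 8, by positivity, ?_⟩
    rw [htb']
    exact key E hE hhull hr0 hta (by linarith : ta ≤ 1) rfl hA hB
  have hhullD : convexHull ℝ D ⊆ S := convexHull_min hDS hSconv
  have hhullEq : convexHull ℝ D = D :=
    Set.Subset.antisymm (hhullD.trans hSD) (subset_convexHull ℝ D)
  constructor
  · rw [hhullEq, Metric.isOpen_iff]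
    intro z hz
    obtain ⟨r, hr, hball⟩ := hDS hz
    exact ⟨r, hr, hball⟩
  · rw [hhullEq]
    refine le_antisymm ?_ zero_le
    calc volume (symmDiff D E) ≤ volume ((D \ E) ∪ (E \ D)) := by
          rw [Set.symmDiff_def]
        _ ≤ volume (D \ E) + volume (E \ D) := measure_union_le _ _
        _ = 0 := by rw [hDE, hED, add_zero]
end

section
/- Let f : ℝⁿ → [0,∞) be measurable with {x : f(x) > 0} of positive measure, such that every superlevel set E_s = {x : f(x) > s} (s > 0) is convex and bounded. Let G ⊆ Aff(ℝⁿ) be the set of invertible affine maps g with g(E_s) = E_s up to a null set for every s > 0. Then G is a compact subgroup of the affine group. -/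
open MeasureTheory Set Matrix
open scoped ENNReal
open Metric

private lemma aff_vol (A : Matrix (Fin n) (Fin n) ℝ) (b : Fin n → ℝ) (S : Set (Fin n → ℝ)) :
    volume ((fun x => A.mulVec x + b) '' S) = ENNReal.ofReal |A.det| * volume S := by
  have h1 : (fun x => A.mulVec x + b) '' S = (fun y => y + b) '' (Matrix.toLin' A '' S) := by
    rw [Set.image_image]
    simp [Matrix.toLin'_apply]
  rw [h1, Set.image_add_right, measure_preimage_add_right,
    MeasureTheory.Measure.addHaar_image_linearMap, LinearMap.det_toLin']


private lemma aff_inj {A : Matrix (Fin n) (Fin n) ℝ} (hA : IsUnit A) (b : Fin n → ℝ) :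
    Function.Injective (fun x : Fin n → ℝ => A.mulVec x + b) := by
  have hd : IsUnit A.det := (Matrix.isUnit_iff_isUnit_det A).mp hA
  intro x y h
  simp only [add_left_inj] at h
  have := congrArg (fun v => A⁻¹.mulVec v) h
  simpa [Matrix.mulVec_mulVec, Matrix.nonsing_inv_mul A hd, Matrix.one_mulVec] using this

private lemma aff_ae {A : Matrix (Fin n) (Fin n) ℝ} (hA : IsUnit A) (b : Fin n → ℝ)
    {S T : Set (Fin n → ℝ)} (h : S =ᵐ[volume] T) :
    ((fun x => A.mulVec x + b) '' S) =ᵐ[volume] ((fun x => A.mulVec x + b) '' T) := by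
  rw [MeasureTheory.ae_eq_set] at h ⊢
  rw [← Set.image_diff (aff_inj hA b), ← Set.image_diff (aff_inj hA b), aff_vol, aff_vol,
    h.1, h.2]
  simp

private lemma aff_image_closure {A : Matrix (Fin n) (Fin n) ℝ} (hA : IsUnit A) (b : Fin n → ℝ)
    (S : Set (Fin n → ℝ)) :
    (fun x => A.mulVec x + b) '' closure S = closure ((fun x => A.mulVec x + b) '' S) := by
  have hd : IsUnit A.det := (Matrix.isUnit_iff_isUnit_det A).mp hA
  have : Invertible A := A.invertibleOfIsUnitDet hd
  let e : (Fin n → ℝ) ≃ₗ[ℝ] (Fin n → ℝ) := Matrix.toLinearEquiv' A this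
  let h : (Fin n → ℝ) ≃ₜ (Fin n → ℝ) :=
    e.toContinuousLinearEquiv.toHomeomorph.trans (Homeomorph.addRight b)
  have he : (fun x : Fin n → ℝ => A.mulVec x + b) = ⇑h := by
    funext x
    simp [h, e, Matrix.toLinearEquiv', Matrix.toLin'_apply]
  rw [he, h.image_closure]

private lemma aff_convex {A : Matrix (Fin n) (Fin n) ℝ} (b : Fin n → ℝ)
    {S : Set (Fin n → ℝ)} (hS : Convex ℝ S) :
    Convex ℝ ((fun x => A.mulVec x + b) '' S) := by
  have h1 : (fun x => A.mulVec x + b) '' S = (fun y => b + y) '' (Matrix.toLin' A '' S) := by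
    rw [Set.image_image]
    simp [Matrix.toLin'_apply, add_comm]
  rw [h1]
  exact (hS.linear_image _).translate b

private lemma ae_closure {S : Set (Fin n → ℝ)} (hS : Convex ℝ S) :
    closure S =ᵐ[volume] S := by
  rw [MeasureTheory.ae_eq_set]
  constructor
  · refine measure_mono_null (fun x hx => ?_) (hS.addHaar_frontier volume)
    exact ⟨hx.1, fun h => hx.2 (interior_subset h)⟩
  · simp [Set.diff_eq_empty.mpr subset_closure]


private lemma interior_nonempty_of_pos {K : Set (Fin n → ℝ)} (hK : Convex ℝ K)
    (hcl : IsClosed K) (hpos : 0 < volume K) : (interior K).Nonempty := by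
  by_contra h
  rw [Set.not_nonempty_iff_eq_empty] at h
  have hf : frontier K = K := by
    rw [frontier, h, hcl.closure_eq, Set.diff_empty]
  have := hK.addHaar_frontier volume
  rw [hf] at this
  exact absurd this hpos.ne'

private lemma diff_pos_of_mem_not_mem {K C : Set (Fin n → ℝ)} (hK : Convex ℝ K)
    (hKcl : IsClosed K) (hpos : 0 < volume K) (hC : IsClosed C) {x : Fin n → ℝ}
    (hx : x ∈ K) (hxC : x ∉ C) : 0 < volume (K \ C) := by
  obtain ⟨y, hy⟩ := interior_nonempty_of_pos hK hKcl hpos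
  obtain ⟨ε, hε, hball⟩ : ∃ ε > 0, ball x ε ⊆ Cᶜ := by
    rcases Metric.isOpen_iff.mp hC.isOpen_compl x hxC with ⟨ε, hε, h⟩
    exact ⟨ε, hε, h⟩
  set d : ℝ := ‖y - x‖ with hd
  have hd0 : 0 ≤ d := norm_nonneg _
  set t : ℝ := min 1 (ε / (2 * (d + 1))) with ht
  have ht0 : 0 < t := lt_min one_pos (by positivity)
  have ht1 : t ≤ 1 := min_le_left _ _
  set z : Fin n → ℝ := x + t • (y - x) with hz
  have hzint : z ∈ interior K :=
    hK.add_smul_mem_interior hx (by simpa using hy) ⟨ht0, ht1⟩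
  have hdistzx : dist z x < ε := by
    have : dist z x = t * d := by
      rw [hz, dist_eq_norm, add_sub_cancel_left, norm_smul, Real.norm_eq_abs,
        abs_of_pos ht0]
    rw [this]
    calc t * d ≤ ε / (2 * (d + 1)) * d := by
          exact mul_le_mul_of_nonneg_right (min_le_right _ _) hd0
      _ < ε := by
          rw [div_mul_eq_mul_div, div_lt_iff₀ (by positivity)]
          nlinarith
  obtain ⟨δ, hδ, hδball⟩ := Metric.isOpen_iff.mp isOpen_interior z hzint
  set ρ : ℝ := min δ (ε - dist z x) with hρ
  have hρ0 : 0 < ρ := lt_min hδ (by linarith)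
  have hsub : ball z ρ ⊆ K \ C := by
    intro w hw
    constructor
    · exact interior_subset (hδball (Metric.mem_ball.mpr (lt_of_lt_of_le (Metric.mem_ball.mp hw) (min_le_left _ _))))
    · apply hball
      have hwz : dist w z < ε - dist z x := lt_of_lt_of_le (Metric.mem_ball.mp hw) (min_le_right _ _)
      have : dist w x ≤ dist w z + dist z x := dist_triangle _ _ _
      simpa [Metric.mem_ball] using lt_of_le_of_lt this (by linarith)
  calc (0 : ℝ≥0∞) < volume (ball z ρ) := measure_ball_pos volume z hρ0
    _ ≤ volume (K \ C) := measure_mono hsub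

private lemma closed_convex_eq {K K' : Set (Fin n → ℝ)} (hK : Convex ℝ K) (hK' : Convex ℝ K')
    (hKcl : IsClosed K) (hK'cl : IsClosed K') (hpos : 0 < volume K)
    (hae : K =ᵐ[volume] K') : K = K' := by
  have hpos' : 0 < volume K' := by
    rw [← measure_congr hae]; exact hpos
  rw [MeasureTheory.ae_eq_set] at hae
  apply Set.Subset.antisymm
  · intro x hx
    by_contra h
    exact absurd hae.1 (diff_pos_of_mem_not_mem hK hKcl hpos hK'cl hx h).ne'
  · intro x hx
    by_contra h
    exact absurd hae.2 (diff_pos_of_mem_not_mem hK' hK'cl hpos' hKcl hx h).ne'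

private lemma exists_s0 (f : (Fin n → ℝ) → ℝ)
    (hpos : 0 < volume {x : Fin n → ℝ | 0 < f x}) :
    ∃ s : ℝ, 0 < s ∧ 0 < volume {x : Fin n → ℝ | s < f x} := by
  by_contra h
  push_neg at h
  have hsub : {x : Fin n → ℝ | 0 < f x} ⊆ ⋃ k : ℕ, {x | 1 / (k + 1 : ℝ) < f x} := by
    intro x hx
    have hx' : (0:ℝ) < f x := hx
    obtain ⟨k, hk⟩ := exists_nat_one_div_lt hx'
    exact Set.mem_iUnion.mpr ⟨k, hk⟩
  have hnull : volume (⋃ k : ℕ, {x : Fin n → ℝ | 1 / (k + 1 : ℝ) < f x}) = 0 :=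
    measure_iUnion_null fun k =>
      le_antisymm (h _ (by positivity)) zero_le
  exact absurd (measure_mono_null hsub hnull) hpos.ne'

private lemma det_abs_one {A : Matrix (Fin n) (Fin n) ℝ} {b : Fin n → ℝ}
    {S : Set (Fin n → ℝ)} (hb : Bornology.IsBounded S) (hv : 0 < volume S)
    (hsymm : volume (symmDiff ((fun x => A.mulVec x + b) '' S) S) = 0) :
    |A.det| = 1 := by
  obtain ⟨R, hR⟩ := hb.subset_closedBall 0
  have hfin : volume S ≠ ∞ :=
    (lt_of_le_of_lt (measure_mono hR) measure_closedBall_lt_top).ne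
  have hae : ((fun x => A.mulVec x + b) '' S) =ᵐ[volume] S :=
    MeasureTheory.measure_symmDiff_eq_zero_iff.mp hsymm
  have h1 : ENNReal.ofReal |A.det| * volume S = volume S := by
    rw [← aff_vol A b S]; exact measure_congr hae
  have h2 : ENNReal.ofReal |A.det| = 1 := by
    calc ENNReal.ofReal |A.det|
        = ENNReal.ofReal |A.det| * (volume S * (volume S)⁻¹) := by
          rw [ENNReal.mul_inv_cancel hv.ne' hfin, mul_one]
      _ = ENNReal.ofReal |A.det| * volume S * (volume S)⁻¹ := by ring
      _ = volume S * (volume S)⁻¹ := by rw [h1]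
      _ = 1 := ENNReal.mul_inv_cancel hv.ne' hfin
  exact ENNReal.ofReal_eq_one.mp h2

/-- For a member of the symmetry group, the closure of a positive-measure convex
superlevel set is exactly invariant. -/
private lemma image_closure_eq {A : Matrix (Fin n) (Fin n) ℝ} {b : Fin n → ℝ}
    (hA : IsUnit A) {S : Set (Fin n → ℝ)} (hS : Convex ℝ S) (hv : 0 < volume S)
    (hsymm : volume (symmDiff ((fun x => A.mulVec x + b) '' S) S) = 0) :
    (fun x => A.mulVec x + b) '' closure S = closure S := by
  have hd : A.det ≠ 0 := by
    intro h
    exact absurd ((Matrix.isUnit_iff_isUnit_det A).mp hA) (by simp [h])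
  have hae : ((fun x => A.mulVec x + b) '' S) =ᵐ[volume] S :=
    MeasureTheory.measure_symmDiff_eq_zero_iff.mp hsymm
  have himg : (fun x => A.mulVec x + b) '' closure S = closure ((fun x => A.mulVec x + b) '' S) :=
    aff_image_closure hA b S
  apply closed_convex_eq
  · rw [himg]; exact (aff_convex b hS).closure
  · exact hS.closure
  · rw [himg]; exact isClosed_closure
  · exact isClosed_closure
  · rw [aff_vol]
    exact ENNReal.mul_pos (by simp [hd, abs_pos]) (hv.trans_le (measure_mono subset_closure)).ne'
  · exact ((aff_ae hA b (ae_closure hS)).trans hae).trans (ae_closure hS).symm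

private lemma symm_null_of_null (A : Matrix (Fin n) (Fin n) ℝ) (b : Fin n → ℝ)
    {S : Set (Fin n → ℝ)} (hS : volume S = 0) :
    volume (symmDiff ((fun x => A.mulVec x + b) '' S) S) = 0 := by
  refine measure_mono_null (Set.symmDiff_subset_union) ?_
  refine le_antisymm (le_trans (measure_union_le _ _) ?_) zero_le
  rw [aff_vol, hS, mul_zero, zero_add]

private lemma symm_null_of_image_closure_subset {A : Matrix (Fin n) (Fin n) ℝ}
    {b : Fin n → ℝ} (hA : IsUnit A) (hdet : |A.det| = 1) {S : Set (Fin n → ℝ)}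
    (hS : Convex ℝ S) (hbS : Bornology.IsBounded S) (hv : 0 < volume S)
    (hsub : (fun x => A.mulVec x + b) '' closure S ⊆ closure S) :
    volume (symmDiff ((fun x => A.mulVec x + b) '' S) S) = 0 := by
  set g : (Fin n → ℝ) → (Fin n → ℝ) := fun x => A.mulVec x + b with hg
  have hKcl : IsClosed (g '' closure S) := by
    rw [hg, aff_image_closure hA b S]; exact isClosed_closure
  have hKfin : volume (closure S) ≠ ∞ := by
    obtain ⟨R, hR⟩ := hbS.closure.subset_closedBall 0
    exact (lt_of_le_of_lt (measure_mono hR) measure_closedBall_lt_top).ne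
  have hKpos : 0 < volume (closure S) := hv.trans_le (measure_mono subset_closure)
  have hveq : volume (g '' closure S) = volume (closure S) := by
    rw [hg, aff_vol, hdet]; simp
  have hKeq : g '' closure S = closure S := by
    refine Set.Subset.antisymm hsub fun x hx => ?_
    by_contra hxg
    have hposd : 0 < volume (closure S \ g '' closure S) :=
      diff_pos_of_mem_not_mem hS.closure isClosed_closure hKpos hKcl hx hxg
    have h0 : volume (closure S \ g '' closure S) = 0 := by
      rw [measure_diff hsub hKcl.measurableSet.nullMeasurableSet (hveq ▸ hKfin), hveq,
        tsub_self]
    exact absurd h0 hposd.ne'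
  refine MeasureTheory.measure_symmDiff_eq_zero_iff.mpr ?_
  have h3 : g '' S =ᵐ[volume] g '' closure S := aff_ae hA b (ae_closure hS).symm
  rw [hKeq] at h3
  exact h3.trans (ae_closure hS)

private lemma compact_box (M Mb : ℝ) :
    IsCompact {p : Matrix (Fin n) (Fin n) ℝ × (Fin n → ℝ) |
      (∀ i j, p.1 i j ∈ Icc (-M) M) ∧ ∀ i, p.2 i ∈ Icc (-Mb) Mb} := by
  have h1 : IsCompact ((Set.univ.pi fun _ : Fin n => Set.univ.pi fun _ : Fin n =>
      Icc (-M) M) : Set (Matrix (Fin n) (Fin n) ℝ)) :=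
    isCompact_univ_pi fun _ => isCompact_univ_pi fun _ => isCompact_Icc
  have h2 : IsCompact (Set.univ.pi fun _ : Fin n => Icc (-Mb) Mb) :=
    isCompact_univ_pi fun _ => isCompact_Icc
  have hset : {p : Matrix (Fin n) (Fin n) ℝ × (Fin n → ℝ) |
      (∀ i j, p.1 i j ∈ Icc (-M) M) ∧ ∀ i, p.2 i ∈ Icc (-Mb) Mb} =
      ((Set.univ.pi fun _ : Fin n => Set.univ.pi fun _ : Fin n => Icc (-M) M) :
        Set (Matrix (Fin n) (Fin n) ℝ)) ×ˢ (Set.univ.pi fun _ : Fin n => Icc (-Mb) Mb) := by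
    ext p
    simp only [Set.mem_setOf_eq, Set.mem_prod, Set.mem_pi, Set.mem_univ, forall_true_left,
      Set.mem_Icc, true_implies]
    exact ⟨fun ⟨h1, h2⟩ => ⟨fun i _ j _ => h1 i j, fun i _ => h2 i⟩,
      fun ⟨h1, h2⟩ => ⟨fun i j => h1 i trivial j trivial, fun i => h2 i trivial⟩⟩
  rw [hset]
  exact h1.prod h2

/-- The symmetry group of the superlevel sets of `f`, viewed inside the affine
group realized as pairs `(A, b)` with `A ∈ GL(n, ℝ)`, `b ∈ ℝⁿ`, acting by
`x ↦ A x + b`. If `f ≥ 0` is measurable with `{f > 0}` of positive measure and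
all superlevel sets convex and bounded, then this group is compact and is a
subgroup (contains the identity and is closed under composition and inverse). -/
theorem symmetry_group_compact_subgroup {n : ℕ}
    (f : (Fin n → ℝ) → ℝ) (hf_meas : Measurable f) (hf_nonneg : ∀ x, 0 ≤ f x)
    (hpos : 0 < volume {x : Fin n → ℝ | 0 < f x})
    (hconv : ∀ s : ℝ, 0 < s → Convex ℝ {x : Fin n → ℝ | s < f x})
    (hbdd : ∀ s : ℝ, 0 < s → Bornology.IsBounded {x : Fin n → ℝ | s < f x})
    (G : Set (Matrix (Fin n) (Fin n) ℝ × (Fin n → ℝ)))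
    (hG : G = {p | IsUnit p.1 ∧ ∀ s : ℝ, 0 < s →
        volume (symmDiff ((fun x => p.1.mulVec x + p.2) '' {x | s < f x})
          {x | s < f x}) = 0}) :
    IsCompact G ∧
    ((1 : Matrix (Fin n) (Fin n) ℝ), (0 : Fin n → ℝ)) ∈ G ∧
    (∀ p q, p ∈ G → q ∈ G → (p.1 * q.1, p.1.mulVec q.2 + p.2) ∈ G) ∧
    (∀ p, p ∈ G → (p.1⁻¹, -(p.1⁻¹.mulVec p.2)) ∈ G) := by
  subst hG
  obtain ⟨s₀, hs₀, hv₀⟩ := exists_s0 f hpos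
  set G : Set (Matrix (Fin n) (Fin n) ℝ × (Fin n → ℝ)) :=
    {p | IsUnit p.1 ∧ ∀ s : ℝ, 0 < s →
        volume (symmDiff ((fun x => p.1.mulVec x + p.2) '' {x | s < f x})
          {x | s < f x}) = 0} with hGdef
  -- closedness of G
  have hclosed : IsClosed G := by
    apply isClosed_of_closure_subset
    intro p hp
    have hdet1 : |p.1.det| = 1 := by
      have hcont : Continuous fun q : Matrix (Fin n) (Fin n) ℝ × (Fin n → ℝ) => |q.1.det| :=
        (continuous_fst.matrix_det).abs
      have hmt : Set.MapsTo (fun q : Matrix (Fin n) (Fin n) ℝ × (Fin n → ℝ) => |q.1.det|)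
          G {(1 : ℝ)} := fun q hq =>
        Set.mem_singleton_iff.mpr (det_abs_one (hbdd s₀ hs₀) hv₀ (hq.2 s₀ hs₀))
      have := map_mem_closure hcont hp hmt
      rwa [closure_singleton, Set.mem_singleton_iff] at this
    have hA : IsUnit p.1 := by
      refine (Matrix.isUnit_iff_isUnit_det _).mpr (isUnit_iff_ne_zero.mpr fun h => ?_)
      rw [h, abs_zero] at hdet1
      norm_num at hdet1
    refine ⟨hA, fun s hs => ?_⟩
    by_cases hvs : volume {x : Fin n → ℝ | s < f x} = 0
    · exact symm_null_of_null _ _ hvs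
    · have hvs' : 0 < volume {x : Fin n → ℝ | s < f x} := pos_iff_ne_zero.mpr hvs
      have hsub : (fun x => p.1.mulVec x + p.2) '' closure {x : Fin n → ℝ | s < f x} ⊆
          closure {x : Fin n → ℝ | s < f x} := by
        rintro _ ⟨x, hx, rfl⟩
        have hcont : Continuous fun q : Matrix (Fin n) (Fin n) ℝ × (Fin n → ℝ) =>
            q.1.mulVec x + q.2 :=
          (continuous_fst.matrix_mulVec continuous_const).add continuous_snd
        have hmt : Set.MapsTo (fun q : Matrix (Fin n) (Fin n) ℝ × (Fin n → ℝ) =>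
            q.1.mulVec x + q.2) G (closure {x : Fin n → ℝ | s < f x}) := by
          intro q hq
          have := image_closure_eq hq.1 (hconv s hs) hvs' (hq.2 s hs)
          rw [← this]
          exact Set.mem_image_of_mem _ hx
        have := map_mem_closure hcont hp hmt
        rwa [closure_closure] at this
      exact symm_null_of_image_closure_subset hA hdet1 (hconv s hs) (hbdd s hs) hvs' hsub
  -- invariance of K₀ under G
  have hGK : ∀ p ∈ G, (fun x => p.1.mulVec x + p.2) '' closure {x : Fin n → ℝ | s₀ < f x}
      = closure {x : Fin n → ℝ | s₀ < f x} := fun p hp =>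
    image_closure_eq hp.1 (hconv s₀ hs₀) hv₀ (hp.2 s₀ hs₀)
  -- geometry of K₀
  obtain ⟨y, hy⟩ := interior_nonempty_of_pos (hconv s₀ hs₀).closure isClosed_closure
    (hv₀.trans_le (measure_mono subset_closure))
  obtain ⟨r, hr, hball⟩ := Metric.isOpen_iff.mp isOpen_interior y hy
  have hballK : ball y r ⊆ closure {x : Fin n → ℝ | s₀ < f x} :=
    fun z hz => interior_subset (hball hz)
  obtain ⟨R0, hR0⟩ := (hbdd s₀ hs₀).closure.subset_closedBall 0
  set R : ℝ := max R0 0 with hRdef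
  have hR : (0 : ℝ) ≤ R := le_max_right _ _
  have hRK : closure {x : Fin n → ℝ | s₀ < f x} ⊆ closedBall 0 R :=
    hR0.trans (closedBall_subset_closedBall (le_max_left _ _))
  have hyK : y ∈ closure {x : Fin n → ℝ | s₀ < f x} := hballK (mem_ball_self hr)
  have hnorm : ∀ p ∈ G, ∀ x ∈ closure {x : Fin n → ℝ | s₀ < f x},
      ‖p.1.mulVec x + p.2‖ ≤ R := by
    intro p hp x hx
    have h1 : p.1.mulVec x + p.2 ∈ closure {x : Fin n → ℝ | s₀ < f x} := by
      rw [← hGK p hp]; exact Set.mem_image_of_mem _ hx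
    simpa [mem_closedBall, dist_zero_right] using hRK h1
  -- entry bounds
  have hentry : ∀ p ∈ G, ∀ i j, |p.1 i j| ≤ 4 * R / r := by
    intro p hp i j
    have hsing : ‖(Pi.single j (1 : ℝ) : Fin n → ℝ)‖ ≤ 1 := by
      rw [pi_norm_le_iff_of_nonneg zero_le_one]
      intro i
      rcases eq_or_ne i j with rfl | hne
      · simp
      · simp [Pi.single_apply, hne]
    set u : Fin n → ℝ := y + (r / 2) • (Pi.single j (1 : ℝ) : Fin n → ℝ) with hu
    have huK : u ∈ closure {x : Fin n → ℝ | s₀ < f x} := by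
      apply hballK
      rw [mem_ball, hu, dist_eq_norm, add_sub_cancel_left, norm_smul, Real.norm_eq_abs,
        abs_of_pos (by positivity : (0:ℝ) < r / 2)]
      nlinarith
    have h1 := hnorm p hp _ huK
    have h2 := hnorm p hp y hyK
    have hdiff : (p.1.mulVec u + p.2)
        - (p.1.mulVec y + p.2) = (r / 2) • p.1.mulVec (Pi.single j (1 : ℝ)) := by
      rw [hu, Matrix.mulVec_add, Matrix.mulVec_smul]
      abel
    have hnd : ‖(r / 2) • p.1.mulVec (Pi.single j (1 : ℝ))‖ ≤ 2 * R := by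
      rw [← hdiff]
      exact (norm_sub_le _ _).trans (by linarith)
    have hcomp : r / 2 * |p.1 i j| ≤ 2 * R := by
      have := (norm_le_pi_norm ((r / 2) • p.1.mulVec (Pi.single j (1 : ℝ))) i).trans hnd
      simpa [Matrix.mulVec_single, Real.norm_eq_abs, abs_mul, abs_of_pos hr] using this
    rw [le_div_iff₀ hr]
    nlinarith
  -- translation bounds
  have hbb : ∀ p ∈ G, ∀ i, |p.2 i| ≤ R + n * (4 * R / r * ‖y‖) := by
    intro p hp i
    have h2 := hnorm p hp y hyK
    have h3 : |(p.1.mulVec y + p.2) i| ≤ R := by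
      have := (norm_le_pi_norm (p.1.mulVec y + p.2) i).trans h2
      simpa [Real.norm_eq_abs] using this
    have h4 : |(p.1.mulVec y) i| ≤ n * (4 * R / r * ‖y‖) := by
      have hexp : (p.1.mulVec y) i = ∑ j, p.1 i j * y j := by
        simp [Matrix.mulVec, dotProduct]
      rw [hexp]
      calc |∑ j, p.1 i j * y j| ≤ ∑ j, |p.1 i j * y j| := Finset.abs_sum_le_sum_abs _ _
        _ ≤ ∑ _j : Fin n, 4 * R / r * ‖y‖ := by
            refine Finset.sum_le_sum fun j _ => ?_
            rw [abs_mul]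
            have hy1 : |y j| ≤ ‖y‖ := by
              have := norm_le_pi_norm y j
              simpa [Real.norm_eq_abs] using this
            have := hentry p hp i j
            have h4R : (0:ℝ) ≤ 4 * R / r := by positivity
            exact mul_le_mul this hy1 (abs_nonneg _) h4R
        _ = n * (4 * R / r * ‖y‖) := by
            simp [Finset.sum_const, Finset.card_univ, nsmul_eq_mul]
    have hbi : p.2 i = (p.1.mulVec y + p.2) i - (p.1.mulVec y) i := by simp
    rw [hbi]
    exact (abs_sub _ _).trans (by linarith)
  -- compactness
  have hsubbox : G ⊆ {p : Matrix (Fin n) (Fin n) ℝ × (Fin n → ℝ) |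
      (∀ i j, p.1 i j ∈ Icc (-(4 * R / r)) (4 * R / r)) ∧
      ∀ i, p.2 i ∈ Icc (-(R + n * (4 * R / r * ‖y‖))) (R + n * (4 * R / r * ‖y‖))} := by
    intro p hp
    exact ⟨fun i j => abs_le.mp (hentry p hp i j),
      fun i => abs_le.mp (hbb p hp i)⟩
  have hcompact : IsCompact G :=
    (compact_box _ _).of_isClosed_subset hclosed hsubbox
  refine ⟨hcompact, ?_, ?_, ?_⟩
  · -- identity
    refine ⟨isUnit_one, fun s hs => ?_⟩
    have : (fun x : Fin n → ℝ => (1 : Matrix (Fin n) (Fin n) ℝ).mulVec x + 0) ''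
        {x | s < f x} = {x | s < f x} := by
      simp [Matrix.one_mulVec]
    rw [this, symmDiff_self]
    simp
  · -- composition
    rintro p q hp hq
    refine ⟨hp.1.mul hq.1, fun s hs => ?_⟩
    have hcomp : (fun x : Fin n → ℝ => (p.1 * q.1).mulVec x + (p.1.mulVec q.2 + p.2)) =
        (fun y => p.1.mulVec y + p.2) ∘ (fun x => q.1.mulVec x + q.2) := by
      funext x
      simp [Function.comp, Matrix.mulVec_add, Matrix.mulVec_mulVec, add_assoc]
    rw [hcomp, Set.image_comp]
    refine MeasureTheory.measure_symmDiff_eq_zero_iff.mpr ?_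
    have hq2 : ((fun x => q.1.mulVec x + q.2) '' {x : Fin n → ℝ | s < f x})
        =ᵐ[volume] {x : Fin n → ℝ | s < f x} :=
      MeasureTheory.measure_symmDiff_eq_zero_iff.mp (hq.2 s hs)
    have hp2 : ((fun x => p.1.mulVec x + p.2) '' {x : Fin n → ℝ | s < f x})
        =ᵐ[volume] {x : Fin n → ℝ | s < f x} :=
      MeasureTheory.measure_symmDiff_eq_zero_iff.mp (hp.2 s hs)
    exact (aff_ae hp.1 p.2 hq2).trans hp2
  · -- inverse
    rintro p hp
    have hd : IsUnit p.1.det := (Matrix.isUnit_iff_isUnit_det _).mp hp.1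
    have hinv : IsUnit p.1⁻¹ :=
      (Matrix.isUnit_iff_isUnit_det _).mpr (p.1.isUnit_nonsing_inv_det hd)
    refine ⟨hinv, fun s hs => ?_⟩
    refine MeasureTheory.measure_symmDiff_eq_zero_iff.mpr ?_
    have hp2 : ((fun x => p.1.mulVec x + p.2) '' {x : Fin n → ℝ | s < f x})
        =ᵐ[volume] {x : Fin n → ℝ | s < f x} :=
      MeasureTheory.measure_symmDiff_eq_zero_iff.mp (hp.2 s hs)
    have h5 := aff_ae hinv (-(p.1⁻¹.mulVec p.2)) hp2
    have hid : (fun x => p.1⁻¹.mulVec x + -(p.1⁻¹.mulVec p.2)) ''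
        ((fun x => p.1.mulVec x + p.2) '' {x : Fin n → ℝ | s < f x}) =
        {x : Fin n → ℝ | s < f x} := by
      rw [← Set.image_comp]
      have : (fun x => p.1⁻¹.mulVec x + -(p.1⁻¹.mulVec p.2)) ∘
          (fun x => p.1.mulVec x + p.2) = id := by
        funext x
        simp [Function.comp, Matrix.mulVec_add, Matrix.mulVec_mulVec,
          Matrix.nonsing_inv_mul _ hd, Matrix.one_mulVec]
      rw [this, Set.image_id]
    rw [hid] at h5
    exact h5.symm
end

section
/- Every compact subgroup of the group of invertible affine transformations of ℝⁿ is conjugate, by an invertible affine transformation, to a subgroup of the orthogonal group O(n). -/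
open Matrix
open scoped MatrixOrder

/-- Composition in the affine group realized as pairs `(A, b)`, acting by
`x ↦ A x + b`. -/
def affMul {n : ℕ} (p q : Matrix (Fin n) (Fin n) ℝ × (Fin n → ℝ)) :
    Matrix (Fin n) (Fin n) ℝ × (Fin n → ℝ) :=
  (p.1 * q.1, p.1.mulVec q.2 + p.2)

/-- Inverse in the affine group realized as pairs `(A, b)`. -/
noncomputable def affInv {n : ℕ} (p : Matrix (Fin n) (Fin n) ℝ × (Fin n → ℝ)) :
    Matrix (Fin n) (Fin n) ℝ × (Fin n → ℝ) :=
  (p.1⁻¹, -(p.1⁻¹.mulVec p.2))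

open MeasureTheory in
/-- Every compact subgroup of the affine group of `ℝⁿ` is conjugate, by an
invertible affine transformation, to a subgroup of the orthogonal group `O(n)`
(in particular, the conjugated elements are linear). -/
theorem compact_affine_subgroup_conjugate_orthogonal {n : ℕ}
    (G : Set (Matrix (Fin n) (Fin n) ℝ × (Fin n → ℝ)))
    (hunit : ∀ p ∈ G, IsUnit p.1)
    (hcompact : IsCompact G)
    (hone : ((1 : Matrix (Fin n) (Fin n) ℝ), (0 : Fin n → ℝ)) ∈ G)
    (hmul : ∀ p ∈ G, ∀ q ∈ G, affMul p q ∈ G)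
    (hinv : ∀ p ∈ G, affInv p ∈ G) :
    ∃ φ : Matrix (Fin n) (Fin n) ℝ × (Fin n → ℝ), IsUnit φ.1 ∧
      ∀ p ∈ G, (affMul (affInv φ) (affMul p φ)).1 ∈ Matrix.orthogonalGroup (Fin n) ℝ ∧
        (affMul (affInv φ) (affMul p φ)).2 = 0 := by
  classical
  have hdet : ∀ p ∈ G, IsUnit p.1.det := fun p hp =>
    (Matrix.isUnit_iff_isUnit_det _).mp (hunit p hp)
  -- Group structure on the subtype `↥G`
  letI : Group ↥G :=
  { mul := fun a b => ⟨affMul a.1 b.1, hmul _ a.2 _ b.2⟩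
    one := ⟨(1, 0), hone⟩
    inv := fun a => ⟨affInv a.1, hinv _ a.2⟩
    div := fun a b => ⟨affMul a.1 (affInv b.1), hmul _ a.2 _ (hinv _ b.2)⟩
    mul_assoc := fun a b c => Subtype.ext (by
      show affMul (affMul a.1 b.1) c.1 = affMul a.1 (affMul b.1 c.1)
      simp [affMul, Matrix.mulVec_add, ← Matrix.mulVec_mulVec, mul_assoc, add_assoc])
    one_mul := fun a => Subtype.ext (by
      show affMul (1, 0) a.1 = a.1
      simp [affMul])
    mul_one := fun a => Subtype.ext (by
      show affMul a.1 (1, 0) = a.1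
      simp [affMul])
    inv_mul_cancel := fun a => Subtype.ext (by
      show affMul (affInv a.1) a.1 = (1, 0)
      simp [affMul, affInv, Matrix.nonsing_inv_mul _ (hdet _ a.2)]) }
  have hmulval : ∀ (a b : ↥G),
      (a * b).val = (a.val.1 * b.val.1, a.val.1.mulVec b.val.2 + a.val.2) := fun a b => rfl
  haveI : ContinuousMul ↥G := ⟨by
    apply Continuous.subtype_mk
    show Continuous fun p : ↥G × ↥G => affMul p.1.val p.2.val
    unfold affMul
    have h1 : Continuous fun p : ↥G × ↥G => p.1.val := continuous_subtype_val.comp continuous_fst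
    have h2 : Continuous fun p : ↥G × ↥G => p.2.val := continuous_subtype_val.comp continuous_snd
    exact (h1.fst.matrix_mul h2.fst).prodMk ((h1.fst.matrix_mulVec h2.snd).add h1.snd)⟩
  haveI : ContinuousInv ↥G := ⟨by
    apply Continuous.subtype_mk
    show Continuous fun a : ↥G => affInv a.val
    have h1 : Continuous fun a : ↥G => (a.val.1)⁻¹ := by
      have e : (fun a : ↥G => (a.val.1)⁻¹)
          = fun a : ↥G => (a.val.1.det)⁻¹ • a.val.1.adjugate := by
        funext a; rw [Matrix.inv_def, Ring.inverse_eq_inv]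
      rw [e]
      exact (continuous_subtype_val.fst.matrix_det.inv₀
        fun a => (hdet _ a.2).ne_zero).smul continuous_subtype_val.fst.matrix_adjugate
    unfold affInv
    exact h1.prodMk (h1.matrix_mulVec continuous_subtype_val.snd).neg⟩
  haveI : IsTopologicalGroup ↥G := {}
  haveI : CompactSpace ↥G := isCompact_iff_compactSpace.mp hcompact
  haveI : Nonempty ↥G := ⟨⟨_, hone⟩⟩
  letI : MeasurableSpace ↥G := borel ↥G
  haveI : BorelSpace ↥G := ⟨rfl⟩
  -- Haar measures: `μ` left invariant, `ν` right invariant, both probability measures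
  set μ : Measure ↥G := Measure.haarMeasure (⊤ : TopologicalSpace.PositiveCompacts ↥G) with hμ
  haveI : IsProbabilityMeasure μ := ⟨by
    rw [← TopologicalSpace.PositiveCompacts.coe_top (α := ↥G)]
    exact Measure.haarMeasure_self⟩
  set ν : Measure ↥G := μ.inv with hν
  haveI : IsProbabilityMeasure ν := ⟨by
    rw [hν, Measure.inv_apply, Set.inv_univ]; exact measure_univ⟩
  -- The fixed point `c` of the affine action
  set c : Fin n → ℝ := ∫ a : ↥G, a.val.2 ∂μ with hc_def
  have hval2_cont : Continuous fun a : ↥G => a.val.2 := continuous_subtype_val.snd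
  have hval2_int : Integrable (fun a : ↥G => a.val.2) μ :=
    hval2_cont.integrable_of_hasCompactSupport (HasCompactSupport.of_compactSpace _)
  have hfix : ∀ p ∈ G, p.1.mulVec c + p.2 = c := by
    intro p hp
    have h1 : p.1.mulVec c = ∫ a : ↥G, p.1.mulVec a.val.2 ∂μ := by
      have := ContinuousLinearMap.integral_comp_comm
        (LinearMap.toContinuousLinearMap p.1.mulVecLin) hval2_int
      simpa using this.symm
    have h2 : p.1.mulVec c + p.2 = ∫ a : ↥G, (p.1.mulVec a.val.2 + p.2) ∂μ := by
      have hint : Integrable (fun a : ↥G => p.1.mulVec a.val.2) μ :=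
        ((continuous_const.matrix_mulVec hval2_cont).integrable_of_hasCompactSupport
          (HasCompactSupport.of_compactSpace _))
      rw [integral_add hint (integrable_const p.2), h1]
      simp
    have h3 : ∫ a : ↥G, (p.1.mulVec a.val.2 + p.2) ∂μ
        = ∫ a : ↥G, ((⟨p, hp⟩ * a : ↥G)).val.2 ∂μ := rfl
    rw [h2, h3, integral_mul_left_eq_self (μ := μ) (fun a : ↥G => a.val.2) ⟨p, hp⟩]
  -- The invariant positive definite matrix `S`
  letI : NormedAddCommGroup (Matrix (Fin n) (Fin n) ℝ) :=
    inferInstanceAs (NormedAddCommGroup (Fin n → Fin n → ℝ))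
  letI : NormedSpace ℝ (Matrix (Fin n) (Fin n) ℝ) :=
    inferInstanceAs (NormedSpace ℝ (Fin n → Fin n → ℝ))
  have hf_cont : Continuous fun a : ↥G => a.val.1ᴴ * a.val.1 :=
    (continuous_subtype_val.fst.matrix_conjTranspose.matrix_mul continuous_subtype_val.fst)
  have hf_int : Integrable (fun a : ↥G => a.val.1ᴴ * a.val.1) ν :=
    hf_cont.integrable_of_hasCompactSupport (HasCompactSupport.of_compactSpace _)
  set S : Matrix (Fin n) (Fin n) ℝ := ∫ a : ↥G, a.val.1ᴴ * a.val.1 ∂ν with hS_def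
  have hSinv : ∀ p ∈ G, p.1ᴴ * S * p.1 = S := by
    intro p hp
    let L0 : Matrix (Fin n) (Fin n) ℝ →ₗ[ℝ] Matrix (Fin n) (Fin n) ℝ :=
      { toFun := fun M => p.1ᴴ * M * p.1
        map_add' := fun x y => by simp [Matrix.mul_add, Matrix.add_mul]
        map_smul' := fun r x => by simp [Matrix.mul_smul, Matrix.smul_mul] }
    have e1 : p.1ᴴ * S * p.1 = ∫ a : ↥G, p.1ᴴ * (a.val.1ᴴ * a.val.1) * p.1 ∂ν := by
      have := ContinuousLinearMap.integral_comp_comm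
        (LinearMap.toContinuousLinearMap L0) hf_int
      rw [hS_def]; simpa [L0] using this.symm
    have e2 : ∀ a : ↥G, p.1ᴴ * (a.val.1ᴴ * a.val.1) * p.1
        = ((a * ⟨p, hp⟩ : ↥G)).val.1ᴴ * ((a * ⟨p, hp⟩ : ↥G)).val.1 := by
      intro a
      rw [hmulval]
      show _ = (a.val.1 * p.1)ᴴ * (a.val.1 * p.1)
      rw [Matrix.conjTranspose_mul]
      noncomm_ring
    rw [e1]
    calc ∫ a : ↥G, p.1ᴴ * (a.val.1ᴴ * a.val.1) * p.1 ∂ν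
        = ∫ a : ↥G, ((a * ⟨p, hp⟩ : ↥G)).val.1ᴴ * ((a * ⟨p, hp⟩ : ↥G)).val.1 ∂ν := by
          congr 1; funext a; exact e2 a
      _ = S := integral_mul_right_eq_self (μ := ν)
            (fun a : ↥G => a.val.1ᴴ * a.val.1) ⟨p, hp⟩
  have hherm : S.IsHermitian := by
    let L1 : Matrix (Fin n) (Fin n) ℝ →ₗ[ℝ] Matrix (Fin n) (Fin n) ℝ :=
      { toFun := fun M => Mᴴ
        map_add' := fun x y => by simp
        map_smul' := fun r x => by simp }
    have e1 : Sᴴ = ∫ a : ↥G, (a.val.1ᴴ * a.val.1)ᴴ ∂ν := by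
      have := ContinuousLinearMap.integral_comp_comm
        (LinearMap.toContinuousLinearMap L1) hf_int
      rw [hS_def]; simpa [L1] using this.symm
    show Sᴴ = S
    rw [e1]
    congr 1; funext a
    exact (Matrix.isHermitian_conjTranspose_mul_self a.val.1).eq
  have hpos : ∀ x : Fin n → ℝ, x ≠ 0 → 0 < dotProduct (star x) (S *ᵥ x) := by
    intro x hx
    let L2 : Matrix (Fin n) (Fin n) ℝ →ₗ[ℝ] ℝ :=
      { toFun := fun M => dotProduct (star x) (M *ᵥ x)
        map_add' := fun M N => by simp [Matrix.add_mulVec, dotProduct_add]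
        map_smul' := fun r M => by simp [Matrix.smul_mulVec, dotProduct_smul] }
    have e1 : dotProduct (star x) (S *ᵥ x)
        = ∫ a : ↥G, dotProduct (star x) ((a.val.1ᴴ * a.val.1) *ᵥ x) ∂ν := by
      have := ContinuousLinearMap.integral_comp_comm
        (LinearMap.toContinuousLinearMap L2) hf_int
      rw [hS_def]; simpa [L2] using this.symm
    have e2 : ∀ a : ↥G, dotProduct (star x) ((a.val.1ᴴ * a.val.1) *ᵥ x)
        = dotProduct (a.val.1 *ᵥ x) (a.val.1 *ᵥ x) := by
      intro a
      rw [← Matrix.mulVec_mulVec, dotProduct_mulVec, Matrix.vecMul_conjTranspose,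
        star_star]
      simp [dotProduct]
    rw [e1]
    have hg_cont : Continuous fun a : ↥G =>
        dotProduct (a.val.1 *ᵥ x) (a.val.1 *ᵥ x) := by
      have h1 : Continuous fun a : ↥G => (a.val.1 *ᵥ x) :=
        continuous_subtype_val.fst.matrix_mulVec continuous_const
      exact h1.dotProduct h1
    have hg_int : Integrable (fun a : ↥G =>
        dotProduct (a.val.1 *ᵥ x) (a.val.1 *ᵥ x)) ν :=
      hg_cont.integrable_of_hasCompactSupport (HasCompactSupport.of_compactSpace _)
    have hg_pos : ∀ a : ↥G, 0 < dotProduct (a.val.1 *ᵥ x) (a.val.1 *ᵥ x) := by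
      intro a
      have hax : a.val.1 *ᵥ x ≠ 0 := by
        intro h
        apply hx
        have := congrArg (fun v => (a.val.1)⁻¹ *ᵥ v) h
        simpa [Matrix.mulVec_mulVec, Matrix.nonsing_inv_mul _ (hdet _ a.2)] using this
      have h0 : dotProduct (a.val.1 *ᵥ x) (a.val.1 *ᵥ x) ≠ 0 :=
        fun h => hax (dotProduct_self_eq_zero.mp h)
      have h1 : 0 ≤ dotProduct (a.val.1 *ᵥ x) (a.val.1 *ᵥ x) :=
        Finset.sum_nonneg fun i _ => mul_self_nonneg _
      exact lt_of_le_of_ne h1 (Ne.symm h0)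
    calc (0:ℝ) < ∫ a : ↥G, dotProduct (a.val.1 *ᵥ x) (a.val.1 *ᵥ x) ∂ν := by
          rw [integral_pos_iff_support_of_nonneg (fun a => (hg_pos a).le) hg_int]
          have : Function.support (fun a : ↥G =>
              dotProduct (a.val.1 *ᵥ x) (a.val.1 *ᵥ x)) = Set.univ :=
            Set.eq_univ_of_forall fun a => (hg_pos a).ne'
          rw [this, measure_univ]
          exact one_pos
      _ = ∫ a : ↥G, dotProduct (star x) ((a.val.1ᴴ * a.val.1) *ᵥ x) ∂ν := by
          congr 1; funext a; exact (e2 a).symm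
  have hSpos : S.PosDef := Matrix.PosDef.of_dotProduct_mulVec_pos hherm hpos
  -- The square root of `S` and the conjugating affine map
  set P : Matrix (Fin n) (Fin n) ℝ := CFC.sqrt S with hP_def
  have hPP : P * P = S := CFC.sqrt_mul_sqrt_self S hSpos.posSemidef.nonneg
  have hPherm : Pᴴ = P := (CFC.sqrt_nonneg S).posSemidef.1
  have hPdet : IsUnit P.det := by
    have h1 : P.det * P.det = S.det := by rw [← Matrix.det_mul, hPP]
    have h2 : IsUnit (P.det * P.det) := by
      rw [h1]; exact (isUnit_iff_ne_zero).mpr hSpos.det_pos.ne'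
    exact isUnit_of_mul_isUnit_left h2
  have hPinv2 : (P⁻¹)⁻¹ = P := Matrix.nonsing_inv_nonsing_inv P hPdet
  have hPinvUnit : IsUnit (P⁻¹ : Matrix (Fin n) (Fin n) ℝ) := by
    rw [Matrix.isUnit_iff_isUnit_det, Matrix.det_nonsing_inv, Ring.inverse_eq_inv,
      isUnit_iff_ne_zero]
    exact inv_ne_zero hPdet.ne_zero
  refine ⟨(P⁻¹, c), hPinvUnit, fun p hp => ⟨?_, ?_⟩⟩
  · -- orthogonality of the conjugated linear part
    have key1 : (affMul (affInv (P⁻¹, c)) (affMul p (P⁻¹, c))).1 = P * (p.1 * P⁻¹) := by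
      show (P⁻¹)⁻¹ * (p.1 * P⁻¹) = _
      rw [hPinv2]
    rw [key1, Matrix.mem_orthogonalGroup_iff', ← Matrix.conjTranspose_eq_transpose_of_trivial]
    have e : (P * (p.1 * P⁻¹))ᴴ = P⁻¹ * p.1ᴴ * P := by
      rw [Matrix.conjTranspose_mul, Matrix.conjTranspose_mul,
        Matrix.conjTranspose_nonsing_inv, hPherm]
    calc (P * (p.1 * P⁻¹))ᴴ * (P * (p.1 * P⁻¹))
        = P⁻¹ * (p.1ᴴ * (P * P) * p.1) * P⁻¹ := by rw [e]; noncomm_ring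
      _ = P⁻¹ * (p.1ᴴ * S * p.1) * P⁻¹ := by rw [hPP]
      _ = P⁻¹ * (P * P) * P⁻¹ := by rw [hSinv p hp, hPP]
      _ = 1 := by
          rw [← Matrix.mul_assoc, Matrix.nonsing_inv_mul _ hPdet,
            Matrix.one_mul, Matrix.mul_nonsing_inv _ hPdet]
  · -- the conjugated translation part vanishes
    show (P⁻¹)⁻¹ *ᵥ (p.1 *ᵥ c + p.2) + -((P⁻¹)⁻¹ *ᵥ c) = 0
    rw [hPinv2, hfix p hp]
    exact add_neg_cancel _
end

section
/- Let f : ℝⁿ → [0,∞) be measurable and define, on ℝᵏ × ℝ₊, ρ(x', s) to be the radius of the ball in ℝ^{n−k} with the same measure as E(x',s) = {v ∈ ℝ^{n−k} : f(x',v) > s}. If f ∈ L^p(ℝⁿ) for some 1 ≤ p < ∞, then ρ ∈ L¹_loc(ℝᵏ × ℝ₊); in particular almost every point of ℝᵏ × ℝ₊ is a Lebesgue point of ρ. -/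
open MeasureTheory Set Filter
open scoped ENNReal Topology

private lemma rho_integrableOn {k m : ℕ} (hm : 1 ≤ m)
    (f : EuclideanSpace ℝ (Fin k) × EuclideanSpace ℝ (Fin m) → ℝ)
    (hf_meas : Measurable f)
    (p : ℝ≥0∞) (hp1 : 1 ≤ p) (hp2 : p ≠ ⊤)
    (hf : MemLp f p volume) (R a b : ℝ) (ha : 0 < a) :
    IntegrableOn
      (fun q : EuclideanSpace ℝ (Fin k) × ℝ =>
        ((volume {v : EuclideanSpace ℝ (Fin m) | q.2 < f (q.1, v)}).toReal /
            (volume (Metric.ball (0 : EuclideanSpace ℝ (Fin m)) 1)).toReal)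
          ^ ((m : ℝ))⁻¹)
      (Metric.ball (0 : EuclideanSpace ℝ (Fin k)) R ×ˢ Set.Ioc a b) volume := by
  set c : ℝ := (volume (Metric.ball (0 : EuclideanSpace ℝ (Fin m)) 1)).toReal with hc
  set μE : EuclideanSpace ℝ (Fin k) × ℝ → ℝ≥0∞ :=
    fun q => volume {v : EuclideanSpace ℝ (Fin m) | q.2 < f (q.1, v)} with hμE
  set U : Set (EuclideanSpace ℝ (Fin k) × ℝ) :=
    Metric.ball (0 : EuclideanSpace ℝ (Fin k)) R ×ˢ Set.Ioc a b with hU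
  have hUm : MeasurableSet U := measurableSet_ball.prod measurableSet_Ioc
  have hμE_meas : Measurable μE := by
    have hS : MeasurableSet {r : (EuclideanSpace ℝ (Fin k) × ℝ) × EuclideanSpace ℝ (Fin m) |
        r.1.2 < f (r.1.1, r.2)} := by
      apply measurableSet_lt
      · exact measurable_snd.comp measurable_fst
      · exact hf_meas.comp ((measurable_fst.comp measurable_fst).prodMk measurable_snd)
    exact measurable_measure_prodMk_left hS
  have hfin : volume {x : EuclideanSpace ℝ (Fin k) × EuclideanSpace ℝ (Fin m) | a < f x} < ∞ := by
    have hsub : {x : EuclideanSpace ℝ (Fin k) × EuclideanSpace ℝ (Fin m) | a < f x}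
        ⊆ {x | a.toNNReal ≤ ‖f x‖₊} := by
      intro x hx
      simp only [mem_setOf_eq] at hx ⊢
      rw [← NNReal.coe_le_coe, Real.coe_toNNReal _ ha.le, coe_nnnorm, Real.norm_eq_abs]
      exact hx.le.trans (le_abs_self _)
    exact (measure_mono hsub).trans_lt
      (hf.meas_ge_lt_top (lt_of_lt_of_le zero_lt_one hp1).ne' hp2
        (by simp [Real.toNNReal_eq_zero, not_le, ha]))
  set w : EuclideanSpace ℝ (Fin k) → ℝ≥0∞ :=
    fun x' => volume {v : EuclideanSpace ℝ (Fin m) | a < f (x', v)} with hw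
  have hw_meas : Measurable w := by
    have hS : MeasurableSet {r : EuclideanSpace ℝ (Fin k) × EuclideanSpace ℝ (Fin m) | a < f r} :=
      measurableSet_lt measurable_const hf_meas
    exact measurable_measure_prodMk_left hS
  have hw_int : ∫⁻ x', w x'
      = volume {x : EuclideanSpace ℝ (Fin k) × EuclideanSpace ℝ (Fin m) | a < f x} := by
    rw [Measure.volume_eq_prod, Measure.prod_apply
      (measurableSet_lt measurable_const hf_meas)]
    rfl
  have hlint : ∫⁻ q in U, μE q < ∞ := by
    have h1 : ∫⁻ q in U, μE q ≤ ∫⁻ q in U, w q.1 := by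
      apply setLIntegral_mono' hUm
      intro q hq
      apply measure_mono
      intro v hv
      exact lt_of_le_of_lt hq.2.1.le hv
    have h2 : ∫⁻ q in U, w q.1
        ≤ ∫⁻ q in (univ : Set (EuclideanSpace ℝ (Fin k))) ×ˢ Set.Ioc a b, w q.1 :=
      lintegral_mono_set (prod_mono_left (subset_univ _))
    have h3 : ∫⁻ q in (univ : Set (EuclideanSpace ℝ (Fin k))) ×ˢ Set.Ioc a b, w q.1
        = volume (Set.Ioc a b)
          * volume {x : EuclideanSpace ℝ (Fin k) × EuclideanSpace ℝ (Fin m) | a < f x} := by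
      rw [Measure.volume_eq_prod, ← Measure.prod_restrict, Measure.restrict_univ]
      have hwf : AEMeasurable (fun q : EuclideanSpace ℝ (Fin k) × ℝ => w q.1)
          ((volume : Measure (EuclideanSpace ℝ (Fin k))).prod
            ((volume : Measure ℝ).restrict (Set.Ioc a b))) :=
        (hw_meas.comp measurable_fst).aemeasurable
      rw [lintegral_prod _ hwf]
      simp only [lintegral_const, Measure.restrict_apply MeasurableSet.univ, univ_inter]
      rw [lintegral_mul_const _ hw_meas, hw_int, mul_comm]
    refine lt_of_le_of_lt (h1.trans (h2.trans_eq h3)) ?_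
    exact ENNReal.mul_lt_top (by simp) hfin
  have hρ_meas : Measurable fun q : EuclideanSpace ℝ (Fin k) × ℝ =>
      ((μE q).toReal / c) ^ ((m : ℝ))⁻¹ :=
    (hμE_meas.ennreal_toReal.div_const c).pow measurable_const
  have hint1 : IntegrableOn (fun q => (μE q).toReal) U volume := by
    refine ⟨hμE_meas.ennreal_toReal.aestronglyMeasurable.restrict, ?_⟩
    rw [hasFiniteIntegral_iff_norm]
    refine lt_of_le_of_lt (lintegral_mono fun q => ?_) hlint
    rw [Real.norm_eq_abs, abs_of_nonneg ENNReal.toReal_nonneg]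
    exact ENNReal.ofReal_toReal_le
  have hUfin : volume U < ∞ := by
    rw [hU, Measure.volume_eq_prod, Measure.prod_prod]
    exact ENNReal.mul_lt_top measure_ball_lt_top (by simp)
  have hg_int : IntegrableOn (fun q => 1 + (μE q).toReal / c) U volume :=
    (integrableOn_const hUfin.ne).add (hint1.div_const c)
  refine Integrable.mono' hg_int hρ_meas.aestronglyMeasurable.restrict ?_
  filter_upwards with q
  have h0 : 0 ≤ (μE q).toReal / c := by positivity
  rw [Real.norm_eq_abs, abs_of_nonneg (Real.rpow_nonneg h0 _)]
  rcases le_or_gt ((μE q).toReal / c) 1 with h | h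
  · calc ((μE q).toReal / c) ^ ((m : ℝ))⁻¹ ≤ 1 :=
          Real.rpow_le_one h0 h (by positivity)
      _ ≤ 1 + (μE q).toReal / c := by linarith
  · calc ((μE q).toReal / c) ^ ((m : ℝ))⁻¹ ≤ ((μE q).toReal / c) ^ (1 : ℝ) := by
          apply Real.rpow_le_rpow_of_exponent_le h.le
          rw [inv_le_one_iff₀]
          right
          exact_mod_cast hm
      _ = (μE q).toReal / c := Real.rpow_one _
      _ ≤ 1 + (μE q).toReal / c := by linarith

/-- For `f ∈ L^p(ℝⁿ)` nonnegative, the radius function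
`ρ(x', s) = (|{v : f(x',v) > s}| / |B(0,1)|)^{1/(n−k)}` is locally integrable on
`ℝᵏ × (0, ∞)`; in particular almost every point of `ℝᵏ × (0,∞)` is a Lebesgue
point of `ρ`. -/
theorem radius_locallyIntegrable {k m : ℕ} (hm : 1 ≤ m)
    (f : EuclideanSpace ℝ (Fin k) × EuclideanSpace ℝ (Fin m) → ℝ)
    (hf_meas : Measurable f) (hf_nonneg : ∀ x, 0 ≤ f x)
    (p : ℝ≥0∞) (hp1 : 1 ≤ p) (hp2 : p ≠ ⊤)
    (hf : MemLp f p volume) :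
    MeasureTheory.LocallyIntegrableOn
      (fun q : EuclideanSpace ℝ (Fin k) × ℝ =>
        ((volume {v : EuclideanSpace ℝ (Fin m) | q.2 < f (q.1, v)}).toReal /
            (volume (Metric.ball (0 : EuclideanSpace ℝ (Fin m)) 1)).toReal)
          ^ ((m : ℝ))⁻¹)
      (Set.univ ×ˢ Set.Ioi (0 : ℝ)) volume ∧
    ∀ᵐ q ∂(volume.restrict ((Set.univ : Set (EuclideanSpace ℝ (Fin k))) ×ˢ Set.Ioi (0 : ℝ))),
      Tendsto (fun r : ℝ =>
          ⨍ y in Metric.closedBall q r,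
            |((volume {v : EuclideanSpace ℝ (Fin m) | y.2 < f (y.1, v)}).toReal /
                  (volume (Metric.ball (0 : EuclideanSpace ℝ (Fin m)) 1)).toReal)
                ^ ((m : ℝ))⁻¹ -
              ((volume {v : EuclideanSpace ℝ (Fin m) | q.2 < f (q.1, v)}).toReal /
                  (volume (Metric.ball (0 : EuclideanSpace ℝ (Fin m)) 1)).toReal)
                ^ ((m : ℝ))⁻¹| ∂volume)
        (𝓝[>] 0) (𝓝 0) := by
  set ρ : EuclideanSpace ℝ (Fin k) × ℝ → ℝ :=
    fun q =>
      ((volume {v : EuclideanSpace ℝ (Fin m) | q.2 < f (q.1, v)}).toReal /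
          (volume (Metric.ball (0 : EuclideanSpace ℝ (Fin m)) 1)).toReal)
        ^ ((m : ℝ))⁻¹ with hρ
  have key : ∀ R a b : ℝ, 0 < a →
      IntegrableOn ρ (Metric.ball (0 : EuclideanSpace ℝ (Fin k)) R ×ˢ Set.Ioc a b) volume :=
    fun R a b ha => rho_integrableOn hm f hf_meas p hp1 hp2 hf R a b ha
  constructor
  · -- local integrability on univ ×ˢ Ioi 0
    rintro ⟨x₀, s₀⟩ hq
    have hs₀ : 0 < s₀ := hq.2
    refine ⟨Metric.ball x₀ 1 ×ˢ Set.Ioo (s₀ / 2) (s₀ + 1), ?_, ?_⟩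
    · apply mem_nhdsWithin_of_mem_nhds
      apply prod_mem_nhds (Metric.ball_mem_nhds _ one_pos)
      exact Ioo_mem_nhds (by linarith) (by linarith)
    · refine (key (‖x₀‖ + 1) (s₀ / 2) (s₀ + 1) (by linarith)).mono_set ?_
      apply Set.prod_mono
      · intro y hy
        have : dist y (0 : EuclideanSpace ℝ (Fin k)) < ‖x₀‖ + 1 := by
          calc dist y 0 ≤ dist y x₀ + dist x₀ 0 := dist_triangle _ _ _
            _ < 1 + ‖x₀‖ := by
                have := Metric.mem_ball.1 hy
                rw [dist_zero_right] at *
                linarith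
            _ = ‖x₀‖ + 1 := by ring
        exact Metric.mem_ball.2 this
      · exact Ioo_subset_Ioc_self
  · -- Lebesgue points
    set t : ℕ → Set (EuclideanSpace ℝ (Fin k) × ℝ) :=
      fun n => (Set.univ : Set (EuclideanSpace ℝ (Fin k))) ×ˢ Set.Ioi (((n : ℝ) + 1)⁻¹) with ht
    have htm : ∀ n, MeasurableSet (t n) :=
      fun n => MeasurableSet.univ.prod measurableSet_Ioi
    set g : ℕ → EuclideanSpace ℝ (Fin k) × ℝ → ℝ := fun n => (t n).indicator ρ with hg
    have hgloc : ∀ n, LocallyIntegrable (g n) volume := by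
      intro n
      rw [MeasureTheory.locallyIntegrable_iff]
      intro K hK
      obtain ⟨R, hR⟩ := hK.isBounded.subset_closedBall (0 : EuclideanSpace ℝ (Fin k) × ℝ)
      have hsub : t n ∩ K ⊆
          Metric.ball (0 : EuclideanSpace ℝ (Fin k)) (R + 1) ×ˢ
            Set.Ioc (((n : ℝ) + 1)⁻¹) (R + 1) := by
        rintro y ⟨hyt, hyK⟩
        have hdist : dist y 0 ≤ R := hR hyK
        have h1 : dist y.1 (0 : EuclideanSpace ℝ (Fin k)) ≤ R := by
          refine le_trans ?_ hdist
          rw [Prod.dist_eq]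
          exact le_max_left _ _
        have h2 : dist y.2 (0 : ℝ) ≤ R := by
          refine le_trans ?_ hdist
          rw [Prod.dist_eq]
          exact le_max_right _ _
        refine ⟨Metric.mem_ball.2 (by linarith), hyt.2, ?_⟩
        rw [Real.dist_eq, sub_zero] at h2
        calc y.2 ≤ |y.2| := le_abs_self _
          _ ≤ R := h2
          _ ≤ R + 1 := by linarith
      have hint : IntegrableOn ρ (t n ∩ K) volume :=
        (key (R + 1) (((n : ℝ) + 1)⁻¹) (R + 1) (by positivity)).mono_set hsub
      have : IntegrableOn ρ (t n) (volume.restrict K) := by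
        rwa [IntegrableOn, Measure.restrict_restrict (htm n)]
      exact (integrable_indicator_iff (htm n)).2 this
    have hLeb : ∀ n, ∀ᵐ q ∂(volume : Measure (EuclideanSpace ℝ (Fin k) × ℝ)),
        Tendsto (fun r : ℝ => ⨍ y in Metric.closedBall q r, ‖g n y - g n q‖ ∂volume)
          (𝓝[>] 0) (𝓝 0) := by
      intro n
      filter_upwards [(Besicovitch.vitaliFamily
        (volume : Measure (EuclideanSpace ℝ (Fin k) × ℝ))).ae_tendsto_average_norm_sub
          (hgloc n)] with q hq
      exact hq.comp (Besicovitch.tendsto_filterAt _ q)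
    have hmemset : MeasurableSet
        ((Set.univ : Set (EuclideanSpace ℝ (Fin k))) ×ˢ Set.Ioi (0 : ℝ)) :=
      MeasurableSet.univ.prod measurableSet_Ioi
    filter_upwards [ae_restrict_mem hmemset, ae_restrict_of_ae (ae_all_iff.2 hLeb)]
      with q hqmem hq
    have hq2 : 0 < q.2 := hqmem.2
    obtain ⟨n, hn⟩ := exists_nat_one_div_lt hq2
    rw [one_div] at hn
    have hqt : q ∈ t n := ⟨mem_univ _, hn⟩
    refine (hq n).congr' ?_
    have hmem : Set.Ioo (0 : ℝ) (q.2 - ((n : ℝ) + 1)⁻¹) ∈ 𝓝[>] (0 : ℝ) :=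
      Ioo_mem_nhdsGT_of_mem ⟨le_rfl, by linarith⟩
    filter_upwards [hmem] with r hr
    have heq : Set.EqOn (fun y => ‖g n y - g n q‖)
        (fun y => |ρ y - ρ q|) (Metric.closedBall q r) := by
      intro y hy
      have hd : dist y.2 q.2 ≤ r := by
        refine le_trans ?_ (Metric.mem_closedBall.1 hy)
        rw [Prod.dist_eq]
        exact le_max_right _ _
      have hyt : y ∈ t n := by
        refine ⟨mem_univ _, ?_⟩
        rw [Real.dist_eq] at hd
        have := abs_le.1 hd
        simp only [Set.mem_Ioi]
        linarith [hr.2, this.1]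
      simp only [hg, Set.indicator_of_mem hyt, Set.indicator_of_mem hqt, Real.norm_eq_abs]
    rw [setAverage_eq, setAverage_eq,
      setIntegral_congr_fun measurableSet_closedBall heq]
end
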